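/- arXiv:2505.24464 — 8 statements merged into one kernel-verified Lean document; each statement's English description precedes it below -/
import Mathlib

section
/- Let φ(a) = ∫ Ψ(a+w) p(w) dw. Suppose Ψ is odd (Ψ(−u) = −Ψ(u)), monotonically nondecreasing, and Ψ(u) > 0 for every u > 0; suppose the density p is symmetric (p(u) = p(−u)) and p(u) > 0 for all |u| ≤ c, for some constant c > 0. Then φ(a) > 0 for every a > 0. -/
open MeasureTheory

/-- If `Ψ` is odd, nondecreasing and strictly positive on positives, and the
symmetric density `p` is strictly positive on `[-c, c]` for some `c > 0`, then
`φ(a) = ∫ Ψ(a+w) p(w) dw` satisfies `φ(a) > 0` for every `a > 0`. -/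
theorem phi_pos (p Ψ : ℝ → ℝ)
    (hp_meas : Measurable p) (hp_nonneg : ∀ u, 0 ≤ p u)
    (hp_int : ∫ u, p u = 1)
    (hΨ_meas : Measurable Ψ) (c₁ : ℝ) (hΨ_bdd : ∀ u, |Ψ u| ≤ c₁)
    (hΨ_odd : ∀ u, Ψ (-u) = -Ψ u)
    (hΨ_mono : ∀ u v : ℝ, u ≤ v → Ψ u ≤ Ψ v)
    (hΨ_pos : ∀ u : ℝ, 0 < u → 0 < Ψ u)
    (hp_symm : ∀ u, p u = p (-u))
    (c : ℝ) (hc : 0 < c) (hp_pos : ∀ u : ℝ, |u| ≤ c → 0 < p u)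
    (φ : ℝ → ℝ) (hφ : ∀ a, φ a = ∫ w, Ψ (a + w) * p w) :
    ∀ a : ℝ, 0 < a → 0 < φ a := by
  have hp_integrable : Integrable p := by
    by_contra h
    rw [integral_undef h] at hp_int; norm_num at hp_int
  intro a ha
  set ε := min c (a / 2) with hε
  have hεpos : 0 < ε := lt_min hc (by linarith)
  have hεc : ε ≤ c := min_le_left _ _
  have hεa : ε ≤ a / 2 := min_le_right _ _
  set f : ℝ → ℝ := fun w => Ψ (a + w) * p w with hf
  have hf_meas : Measurable f :=
    (hΨ_meas.comp (measurable_const.add measurable_id)).mul hp_meas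
  have hf_int : Integrable f := by
    refine (hp_integrable.const_mul c₁).mono' hf_meas.aestronglyMeasurable ?_
    filter_upwards with w
    have : ‖f w‖ = |Ψ (a + w)| * p w := by
      simp [hf, abs_mul, abs_of_nonneg (hp_nonneg w)]
    rw [this]
    exact mul_le_mul_of_nonneg_right (hΨ_bdd _) (hp_nonneg w)
  set g : ℝ → ℝ := fun w => f w + f (-w) with hg
  have hfneg_int : Integrable (fun w => f (-w)) := hf_int.comp_neg
  have hg_int : Integrable g := hf_int.add hfneg_int
  have hg_eq : ∀ w, g w = (Ψ (a + w) + Ψ (a - w)) * p w := by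
    intro w
    simp only [hg, hf]
    rw [← hp_symm w]
    ring_nf
  have hg_nonneg : ∀ w, 0 ≤ g w := by
    intro w
    rw [hg_eq w]
    apply mul_nonneg _ (hp_nonneg w)
    have h1 : Ψ (w - a) ≤ Ψ (a + w) := hΨ_mono _ _ (by linarith)
    have h2 : Ψ (w - a) = -Ψ (a - w) := by
      rw [← hΨ_odd]; ring_nf
    linarith
  have hg_pos : ∀ w ∈ Set.Ioo (-ε) ε, 0 < g w := by
    intro w hw
    rw [hg_eq w]
    have hw1 : -ε < w := hw.1
    have hw2 : w < ε := hw.2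
    have hpw : 0 < p w := hp_pos w (by rw [abs_le]; constructor <;> linarith)
    have h1 : 0 < Ψ (a + w) := hΨ_pos _ (by linarith)
    have h2 : 0 < Ψ (a - w) := hΨ_pos _ (by linarith)
    positivity
  have hint_pos : 0 < ∫ w, g w := by
    rw [integral_pos_iff_support_of_nonneg hg_nonneg hg_int]
    have hsub : Set.Ioo (-ε) ε ⊆ Function.support g := by
      intro w hw
      exact (hg_pos w hw).ne'
    calc (0 : ENNReal) < volume (Set.Ioo (-ε) ε) := by
          rw [Real.volume_Ioo]
          simp only [ENNReal.ofReal_pos]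
          linarith
      _ ≤ volume (Function.support g) := measure_mono hsub
  have hint_eq : ∫ w, g w = 2 * φ a := by
    rw [hφ a]
    have : ∫ w, f (-w) = ∫ w, f w := integral_neg_eq_self f volume
    rw [hg, integral_add hf_int hfneg_int, this]
    simp [hf]; ring
  rw [hint_eq] at hint_pos
  linarith
end

section
/- Let φ(a) = ∫ Ψ(a+w) p(w) dw. Suppose Ψ is odd (Ψ(−u) = −Ψ(u)), Ψ(u) > 0 for u > 0, Ψ is monotonically nondecreasing, |Ψ(u)| ≤ c₁ for all u, and Ψ is differentiable everywhere with |Ψ'(u)| ≤ c₂, for some constants c₁, c₂ > 0; suppose the density p is symmetric (p(u) = p(−u)) and p(u) > 0 for all |u| ≤ c, for some constant c > 0. Then φ is differentiable at 0 and its derivative at zero is strictly positive: φ'(0) > 0. -/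
open MeasureTheory

/-- A monotone function has nonnegative derivative at every point. -/
lemma mono_deriv_nonneg_aux (f : ℝ → ℝ) (hmono : ∀ u v : ℝ, u ≤ v → f u ≤ f v)
    (x : ℝ) (hdiff : DifferentiableAt ℝ f x) : 0 ≤ deriv f x := by
  have h := hdiff.hasDerivAt
  rw [hasDerivAt_iff_tendsto_slope] at h
  refine ge_of_tendsto h ?_
  filter_upwards [self_mem_nhdsWithin] with y hy
  rcases lt_or_gt_of_ne (Ne.symm hy) with hlt | hlt
  · rw [slope_def_field]
    exact div_nonneg (by linarith [hmono x y hlt.le]) (by linarith)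
  · rw [slope_def_field, div_nonneg_iff]
    right
    constructor <;> [linarith [hmono y x hlt.le]; linarith]

/-- Under the full set of assumptions on the nonlinearity `Ψ` and the
symmetric density `p` which is positive around the origin, the function
`φ(a) = ∫ Ψ(a+w) p(w) dw` is differentiable at `0` with strictly positive
derivative `φ'(0) > 0`. -/
theorem phi_deriv_zero_pos (p Ψ : ℝ → ℝ)
    (hp_meas : Measurable p) (hp_nonneg : ∀ u, 0 ≤ p u)
    (hp_int : ∫ u, p u = 1)
    (hΨ_meas : Measurable Ψ)
    (hΨ_odd : ∀ u, Ψ (-u) = -Ψ u)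
    (hΨ_pos : ∀ u : ℝ, 0 < u → 0 < Ψ u)
    (hΨ_mono : ∀ u v : ℝ, u ≤ v → Ψ u ≤ Ψ v)
    (c₁ : ℝ) (hc₁ : 0 < c₁) (hΨ_bdd : ∀ u, |Ψ u| ≤ c₁)
    (hΨ_diff : ∀ u : ℝ, DifferentiableAt ℝ Ψ u)
    (c₂ : ℝ) (hc₂ : 0 < c₂) (hΨ'_bdd : ∀ u, |deriv Ψ u| ≤ c₂)
    (hp_symm : ∀ u, p u = p (-u))
    (c : ℝ) (hc : 0 < c) (hp_pos : ∀ u : ℝ, |u| ≤ c → 0 < p u)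
    (φ : ℝ → ℝ) (hφ : ∀ a, φ a = ∫ w, Ψ (a + w) * p w) :
    DifferentiableAt ℝ φ 0 ∧ 0 < deriv φ 0 := by
  -- p is integrable
  have hp_integrable : Integrable p := by
    by_contra h
    rw [integral_undef h] at hp_int
    norm_num at hp_int
  have hΨ0 : Ψ 0 = 0 := by
    have := hΨ_odd 0
    simp at this
    linarith
  -- measurability of deriv Ψ
  have hΨ'_meas : Measurable (deriv Ψ) := measurable_deriv Ψ
  -- differentiate under the integral sign
  have key := hasDerivAt_integral_of_dominated_loc_of_deriv_le
      (F := fun a w => Ψ (a + w) * p w) (F' := fun a w => deriv Ψ (a + w) * p w)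
      (x₀ := (0:ℝ)) (bound := fun w => c₂ * p w) (μ := volume) (s := Metric.ball (0:ℝ) 1) (Metric.ball_mem_nhds _ one_pos)
      ?_ ?_ ?_ ?_ ?_ ?_
  · obtain ⟨hF'_int, hder⟩ := key
    have hφ_eq : φ = fun a => ∫ w, Ψ (a + w) * p w := funext hφ
    rw [hφ_eq]
    have hder' : HasDerivAt (fun a => ∫ w, Ψ (a + w) * p w)
        (∫ w, deriv Ψ (0 + w) * p w) 0 := hder
    refine ⟨hder'.differentiableAt, ?_⟩
    rw [hder'.deriv]
    -- simplify 0 + w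
    simp only [zero_add] at hF'_int ⊢
    -- positivity of the integral
    have hg_nonneg : ∀ w, 0 ≤ deriv Ψ w * p w := fun w =>
      mul_nonneg (mono_deriv_nonneg_aux Ψ hΨ_mono w (hΨ_diff w)) (hp_nonneg w)
    rw [integral_pos_iff_support_of_nonneg hg_nonneg hF'_int]
    -- need: support has positive measure
    by_contra hsupp
    push_neg at hsupp
    have hsupp0 : volume (Function.support fun w => deriv Ψ w * p w) = 0 :=
      le_antisymm hsupp zero_le
    -- then deriv Ψ = 0 a.e. on [0,c]
    have hS : {w : ℝ | w ∈ Set.Icc 0 c ∧ deriv Ψ w ≠ 0} ⊆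
        Function.support fun w => deriv Ψ w * p w := by
      rintro w ⟨hw, hne⟩
      have hpw : 0 < p w := hp_pos w (by rw [abs_of_nonneg hw.1]; exact hw.2)
      exact mul_ne_zero hne hpw.ne'
    have hS0 : volume {w : ℝ | w ∈ Set.Icc 0 c ∧ deriv Ψ w ≠ 0} = 0 :=
      measure_mono_null hS hsupp0
    -- FTC: ∫ x in 0..c, deriv Ψ x = Ψ c - Ψ 0 = Ψ c > 0
    have hint : IntervalIntegrable (deriv Ψ) volume 0 c := by
      apply IntervalIntegrable.mono_fun' (g := fun _ => c₂) intervalIntegrable_const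
        hΨ'_meas.aestronglyMeasurable
      exact Filter.Eventually.of_forall fun x => hΨ'_bdd x
    have hFTC : (∫ x in (0:ℝ)..c, deriv Ψ x) = Ψ c - Ψ 0 :=
      intervalIntegral.integral_deriv_eq_sub (fun x _ => hΨ_diff x) hint
    have hzero : (∫ x in (0:ℝ)..c, deriv Ψ x) = 0 := by
      rw [intervalIntegral.integral_of_le hc.le]
      apply integral_eq_zero_of_ae
      rw [Filter.EventuallyEq, ae_restrict_iff' measurableSet_Ioc]
      rw [ae_iff]
      apply measure_mono_null _ hS0
      intro w hw
      simp only [Set.mem_setOf_eq, Classical.not_imp, Pi.zero_apply] at hw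
      exact ⟨Set.Ioc_subset_Icc_self hw.1, hw.2⟩
    rw [hFTC, hΨ0, sub_zero] at hzero
    exact (hΨ_pos c hc).ne' hzero
  · -- hF_meas
    filter_upwards with x
    exact ((hΨ_meas.comp (measurable_const.add measurable_id)).mul hp_meas).aestronglyMeasurable
  · -- hF_int
    apply Integrable.mono' (hp_integrable.const_mul c₁)
    · exact ((hΨ_meas.comp (measurable_const.add measurable_id)).mul hp_meas).aestronglyMeasurable
    · filter_upwards with w
      rw [norm_mul, Real.norm_eq_abs, Real.norm_eq_abs, abs_of_nonneg (hp_nonneg w)]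
      exact mul_le_mul_of_nonneg_right (hΨ_bdd _) (hp_nonneg w)
  · -- hF'_meas
    exact ((hΨ'_meas.comp (measurable_const.add measurable_id)).mul hp_meas).aestronglyMeasurable
  · -- h_bound
    filter_upwards with w x _
    rw [norm_mul, Real.norm_eq_abs, Real.norm_eq_abs, abs_of_nonneg (hp_nonneg w)]
    exact mul_le_mul_of_nonneg_right (hΨ'_bdd _) (hp_nonneg w)
  · -- bound integrable
    exact hp_integrable.const_mul c₂
  · -- h_diff
    filter_upwards with w x _
    have h1 : HasDerivAt (fun a => Ψ (a + w)) (deriv Ψ (x + w)) x := by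
      have := ((hΨ_diff (x + w)).hasDerivAt).comp x ((hasDerivAt_id x).add_const w)
      simpa [Function.comp_def] using this
    exact h1.mul_const (p w)
end

section
/- Let φ(a) = ∫ Ψ(a+w) p(w) dw. Suppose Ψ is odd (Ψ(−u) = −Ψ(u)), Ψ(u) > 0 for u > 0, Ψ is monotonically nondecreasing, |Ψ(u)| ≤ c₁ for all u, and Ψ is differentiable everywhere with |Ψ'(u)| ≤ c₂, for some constants c₁, c₂ > 0; suppose the density p is symmetric (p(u) = p(−u)) and p(u) > 0 for all |u| ≤ c, for some constant c > 0. Then for every g > 0 there exists a constant K > 0 such that |φ(a)| ≥ K |a| for all a with 0 < |a| ≤ g. -/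
open MeasureTheory

lemma pb_p_integrable (p : ℝ → ℝ) (hp_int : ∫ u, p u = 1) : Integrable p := by
  by_contra h
  rw [integral_undef h] at hp_int
  norm_num at hp_int

lemma pb_integrable (p Ψ : ℝ → ℝ) (hp_meas : Measurable p) (hp_nonneg : ∀ u, 0 ≤ p u)
    (hpi : Integrable p) (hΨ_meas : Measurable Ψ) (c₁ : ℝ) (hΨ_bdd : ∀ u, |Ψ u| ≤ c₁)
    (a : ℝ) : Integrable (fun w => Ψ (a + w) * p w) := by
  apply Integrable.mono' (hpi.const_mul c₁)
  · exact ((hΨ_meas.comp (measurable_const.add measurable_id)).mul hp_meas).aestronglyMeasurable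
  · filter_upwards with w
    rw [Real.norm_eq_abs, abs_mul, abs_of_nonneg (hp_nonneg w)]
    exact mul_le_mul_of_nonneg_right (hΨ_bdd _) (hp_nonneg w)

lemma pb_deriv (p Ψ : ℝ → ℝ) (hp_meas : Measurable p) (hp_nonneg : ∀ u, 0 ≤ p u)
    (hpi : Integrable p) (hΨ_meas : Measurable Ψ) (c₁ : ℝ) (hΨ_bdd : ∀ u, |Ψ u| ≤ c₁)
    (hΨ_diff : ∀ u : ℝ, DifferentiableAt ℝ Ψ u)
    (c₂ : ℝ) (hΨ'_bdd : ∀ u, |deriv Ψ u| ≤ c₂) (a : ℝ) :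
    HasDerivAt (fun x => ∫ w, Ψ (x + w) * p w) (∫ w, deriv Ψ (a + w) * p w) a := by
  have key := hasDerivAt_integral_of_dominated_loc_of_deriv_le (μ := volume) (x₀ := a)
    (F := fun x w => Ψ (x + w) * p w) (F' := fun x w => deriv Ψ (x + w) * p w)
    (bound := fun w => c₂ * p w) (s := Set.univ) Filter.univ_mem
    (Filter.Eventually.of_forall fun x =>
      ((hΨ_meas.comp (measurable_const.add measurable_id)).mul hp_meas).aestronglyMeasurable)
    (pb_integrable p Ψ hp_meas hp_nonneg hpi hΨ_meas c₁ hΨ_bdd a)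
    (((measurable_deriv Ψ).comp (measurable_const.add measurable_id)).mul
      hp_meas).aestronglyMeasurable
    (Filter.Eventually.of_forall fun w x _ => by
      rw [Real.norm_eq_abs, abs_mul, abs_of_nonneg (hp_nonneg w)]
      exact mul_le_mul_of_nonneg_right (hΨ'_bdd _) (hp_nonneg w))
    (hpi.const_mul c₂)
    (Filter.Eventually.of_forall fun w x _ => by
      have h1 : HasDerivAt (fun x : ℝ => Ψ (x + w)) (deriv Ψ (x + w)) x := by
        simpa [Function.comp_def] using ((hΨ_diff (x + w)).hasDerivAt).comp x ((hasDerivAt_id x).add_const w)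
      exact h1.mul_const (p w))
  exact key.2


lemma pb_integrable' (p : ℝ → ℝ) (hp_meas : Measurable p) (hp_nonneg : ∀ u, 0 ≤ p u)
    (hpi : Integrable p) (f : ℝ → ℝ) (hf : Measurable f) (c₁ : ℝ) (hbd : ∀ w, |f w| ≤ c₁) :
    Integrable (fun w => f w * p w) := by
  apply Integrable.mono' (hpi.const_mul c₁)
  · exact (hf.mul hp_meas).aestronglyMeasurable
  · filter_upwards with w
    rw [Real.norm_eq_abs, abs_mul, abs_of_nonneg (hp_nonneg w)]
    exact mul_le_mul_of_nonneg_right (hbd _) (hp_nonneg w)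

lemma pb_pos_integral (h : ℝ → ℝ) (hint : Integrable h) (hnn : ∀ x, 0 ≤ h x)
    (s : Set ℝ) (hs : 0 < volume s) (hpos : ∀ x ∈ s, 0 < h x) : 0 < ∫ x, h x := by
  rcases (integral_nonneg (f := h) hnn).lt_or_eq with hlt | heq
  · exact hlt
  · exfalso
    have h0 : h =ᵐ[volume] 0 := (integral_eq_zero_iff_of_nonneg hnn hint).mp heq.symm
    have hnull : volume {x | h x ≠ 0} = 0 := by
      simpa [Filter.EventuallyEq, ae_iff] using h0
    have : volume s ≤ volume {x | h x ≠ 0} :=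
      measure_mono fun x hx => (hpos x hx).ne'
    rw [hnull] at this
    exact absurd (le_antisymm this (zero_le (a := volume s))) hs.ne'

lemma pb_odd (p Ψ : ℝ → ℝ) (hΨ_odd : ∀ u, Ψ (-u) = -Ψ u) (hp_symm : ∀ u, p u = p (-u))
    (a : ℝ) : (∫ w, Ψ (-a + w) * p w) = -∫ w, Ψ (a + w) * p w := by
  have h1 : (∫ w, Ψ (-a + w) * p w) = ∫ w, Ψ (-a + -w) * p (-w) :=
    (integral_neg_eq_self (fun w => Ψ (-a + w) * p w) volume).symm
  rw [h1]
  have h2 : ∀ w : ℝ, Ψ (-a + -w) * p (-w) = -(Ψ (a + w) * p w) := by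
    intro w
    rw [← neg_add, hΨ_odd, ← hp_symm]
    ring
  simp_rw [h2]
  exact integral_neg _

lemma pb_symm (p Ψ : ℝ → ℝ) (hp_symm : ∀ u, p u = p (-u)) (a : ℝ) :
    (∫ w, Ψ (a + w) * p w) = ∫ w, Ψ (a - w) * p w := by
  have h1 : (∫ w, Ψ (a + w) * p w) = ∫ w, Ψ (a + -w) * p (-w) :=
    (integral_neg_eq_self (fun w => Ψ (a + w) * p w) volume).symm
  rw [h1]
  congr 1
  ext w
  rw [← hp_symm, ← sub_eq_add_neg]

lemma pb_deriv_nonneg (Ψ : ℝ → ℝ) (hΨ_mono : ∀ u v : ℝ, u ≤ v → Ψ u ≤ Ψ v)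
    (hΨ_diff : ∀ u : ℝ, DifferentiableAt ℝ Ψ u) (u : ℝ) : 0 ≤ deriv Ψ u := by
  have h := (hΨ_diff u).hasDerivAt
  rw [hasDerivAt_iff_tendsto_slope] at h
  have h2 : Filter.Tendsto (slope Ψ u) (nhdsWithin u (Set.Ioi u)) (nhds (deriv Ψ u)) :=
    h.mono_left (nhdsWithin_mono _ fun x hx => ne_of_gt hx)
  refine ge_of_tendsto h2 ?_
  filter_upwards [self_mem_nhdsWithin] with x hx
  have hx' : u < x := hx
  rw [slope_def_field]
  exact div_nonneg (sub_nonneg.2 (hΨ_mono _ _ hx'.le)) (sub_nonneg.2 hx'.le)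


lemma pb_D_pos (p Ψ : ℝ → ℝ) (hp_meas : Measurable p) (hp_nonneg : ∀ u, 0 ≤ p u)
    (hpi : Integrable p)
    (hΨ_odd : ∀ u, Ψ (-u) = -Ψ u)
    (hΨ_pos : ∀ u : ℝ, 0 < u → 0 < Ψ u)
    (hΨ_mono : ∀ u v : ℝ, u ≤ v → Ψ u ≤ Ψ v)
    (hΨ_diff : ∀ u : ℝ, DifferentiableAt ℝ Ψ u)
    (c₂ : ℝ) (hΨ'_bdd : ∀ u, |deriv Ψ u| ≤ c₂)
    (c : ℝ) (hc : 0 < c) (hp_pos : ∀ u : ℝ, |u| ≤ c → 0 < p u) :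
    0 < ∫ w, deriv Ψ w * p w := by
  have hΨ0 : Ψ 0 = 0 := by have := hΨ_odd 0; simp at this; linarith
  have hint : Integrable (fun w => deriv Ψ w * p w) :=
    pb_integrable' p hp_meas hp_nonneg hpi _ (measurable_deriv Ψ) c₂ hΨ'_bdd
  have hnn : ∀ w, 0 ≤ deriv Ψ w * p w := fun w =>
    mul_nonneg (pb_deriv_nonneg Ψ hΨ_mono hΨ_diff w) (hp_nonneg w)
  rcases (integral_nonneg (f := fun w => deriv Ψ w * p w) hnn).lt_or_eq with hlt | heq
  · exact hlt
  · exfalso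
    have hae : ∀ᵐ w, deriv Ψ w * p w = 0 :=
      (integral_eq_zero_iff_of_nonneg hnn hint).mp heq.symm
    have hae2 : ∀ᵐ w, w ∈ Set.Ioc 0 c → deriv Ψ w = 0 := by
      filter_upwards [hae] with w hw hmem
      have hp : 0 < p w := hp_pos w (abs_le.2 ⟨by linarith [hmem.1], hmem.2⟩)
      exact (mul_eq_zero.mp hw).resolve_right hp.ne'
    have hz : ∫ x in Set.Ioc 0 c, deriv Ψ x = 0 := setIntegral_eq_zero_of_ae_eq_zero hae2
    have hii : IntervalIntegrable (deriv Ψ) volume 0 c := by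
      rw [intervalIntegrable_iff]
      apply Integrable.mono' (g := fun _ => c₂) (integrableOn_const measure_Ioc_lt_top.ne)
      · exact (measurable_deriv Ψ).aestronglyMeasurable
      · filter_upwards with w
        exact hΨ'_bdd w
    have hftc : ∫ x in (0:ℝ)..c, deriv Ψ x = Ψ c - Ψ 0 :=
      intervalIntegral.integral_eq_sub_of_hasDerivAt (fun x _ => (hΨ_diff x).hasDerivAt) hii
    rw [intervalIntegral.integral_of_le hc.le, hz] at hftc
    have := hΨ_pos c hc
    rw [hΨ0] at hftc
    linarith

lemma pb_phi_pos (p Ψ : ℝ → ℝ) (hp_meas : Measurable p) (hp_nonneg : ∀ u, 0 ≤ p u)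
    (hpi : Integrable p) (hΨ_meas : Measurable Ψ)
    (hΨ_odd : ∀ u, Ψ (-u) = -Ψ u)
    (hΨ_pos : ∀ u : ℝ, 0 < u → 0 < Ψ u)
    (hΨ_mono : ∀ u v : ℝ, u ≤ v → Ψ u ≤ Ψ v)
    (c₁ : ℝ) (hΨ_bdd : ∀ u, |Ψ u| ≤ c₁)
    (hp_symm : ∀ u, p u = p (-u))
    (c : ℝ) (hc : 0 < c) (hp_pos : ∀ u : ℝ, |u| ≤ c → 0 < p u)
    (a : ℝ) (ha : 0 < a) : 0 < ∫ w, Ψ (a + w) * p w := by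
  have hΨ0 : Ψ 0 = 0 := by have := hΨ_odd 0; simp at this; linarith
  have hint1 : Integrable (fun w => Ψ (a + w) * p w) :=
    pb_integrable' p hp_meas hp_nonneg hpi _
      (hΨ_meas.comp (measurable_const.add measurable_id)) c₁ (fun w => hΨ_bdd _)
  have hint2 : Integrable (fun w => Ψ (a - w) * p w) :=
    pb_integrable' p hp_meas hp_nonneg hpi _
      (hΨ_meas.comp (measurable_const.sub measurable_id)) c₁ (fun w => hΨ_bdd _)
  have key : (2:ℝ) * ∫ w, Ψ (a + w) * p w = ∫ w, (Ψ (a + w) + Ψ (a - w)) * p w := by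
    rw [two_mul]
    nth_rewrite 2 [pb_symm p Ψ hp_symm a]
    rw [← integral_add hint1 hint2]
    congr 1
    ext w
    ring
  have hnn : ∀ w, 0 ≤ (Ψ (a + w) + Ψ (a - w)) * p w := by
    intro w
    have h1 : Ψ (-(a - w)) ≤ Ψ (a + w) := hΨ_mono _ _ (by linarith)
    rw [hΨ_odd] at h1
    exact mul_nonneg (by linarith) (hp_nonneg w)
  have hpos : 0 < ∫ w, (Ψ (a + w) + Ψ (a - w)) * p w := by
    apply pb_pos_integral _
      (by
        have : (fun w => (Ψ (a + w) + Ψ (a - w)) * p w)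
            = fun w => Ψ (a + w) * p w + Ψ (a - w) * p w := by ext w; ring
        rw [this]; exact hint1.add hint2)
      hnn (Set.Ioc 0 (min a c))
    · rw [Real.volume_Ioc]
      exact ENNReal.ofReal_pos.2 (by simp [lt_min ha hc])
    · intro w hw
      have hw1 : 0 < w := hw.1
      have hwa : w ≤ a := hw.2.trans (min_le_left _ _)
      have hwc : w ≤ c := hw.2.trans (min_le_right _ _)
      have hp : 0 < p w := hp_pos w (abs_le.2 ⟨by linarith, hwc⟩)
      have h1 : Ψ a ≤ Ψ (a + w) := hΨ_mono _ _ (by linarith)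
      have h2 : Ψ 0 ≤ Ψ (a - w) := hΨ_mono _ _ (by linarith)
      rw [hΨ0] at h2
      have := hΨ_pos a ha
      exact mul_pos (by linarith) hp
  linarith


/-- Under the full set of assumptions on the nonlinearity `Ψ` and the
symmetric density `p` which is positive around the origin, for every `g > 0`
there exists `K > 0` such that `|φ(a)| ≥ K |a|` whenever `0 < |a| ≤ g`, where
`φ(a) = ∫ Ψ(a+w) p(w) dw`. -/
theorem phi_lower_bound (p Ψ : ℝ → ℝ)
    (hp_meas : Measurable p) (hp_nonneg : ∀ u, 0 ≤ p u)
    (hp_int : ∫ u, p u = 1)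
    (hΨ_meas : Measurable Ψ)
    (hΨ_odd : ∀ u, Ψ (-u) = -Ψ u)
    (hΨ_pos : ∀ u : ℝ, 0 < u → 0 < Ψ u)
    (hΨ_mono : ∀ u v : ℝ, u ≤ v → Ψ u ≤ Ψ v)
    (c₁ : ℝ) (hc₁ : 0 < c₁) (hΨ_bdd : ∀ u, |Ψ u| ≤ c₁)
    (hΨ_diff : ∀ u : ℝ, DifferentiableAt ℝ Ψ u)
    (c₂ : ℝ) (hc₂ : 0 < c₂) (hΨ'_bdd : ∀ u, |deriv Ψ u| ≤ c₂)
    (hp_symm : ∀ u, p u = p (-u))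
    (c : ℝ) (hc : 0 < c) (hp_pos : ∀ u : ℝ, |u| ≤ c → 0 < p u)
    (φ : ℝ → ℝ) (hφ : ∀ a, φ a = ∫ w, Ψ (a + w) * p w) :
    ∀ g : ℝ, 0 < g → ∃ K : ℝ, 0 < K ∧
      ∀ a : ℝ, 0 < |a| → |a| ≤ g → K * |a| ≤ |φ a| := by
  intro g hg
  have hpi : Integrable p := pb_p_integrable p hp_int
  set F : ℝ → ℝ := fun x => ∫ w, Ψ (x + w) * p w with hF
  have hφF : ∀ a, φ a = F a := hφ
  -- F is positive on positives
  have hFpos : ∀ a : ℝ, 0 < a → 0 < F a := fun a ha =>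
    pb_phi_pos p Ψ hp_meas hp_nonneg hpi hΨ_meas hΨ_odd hΨ_pos hΨ_mono c₁ hΨ_bdd
      hp_symm c hc hp_pos a ha
  -- F is odd
  have hFodd : ∀ a : ℝ, F (-a) = -F a := fun a => pb_odd p Ψ hΨ_odd hp_symm a
  -- F 0 = 0
  have hF0 : F 0 = 0 := by have := hFodd 0; rw [neg_zero] at this; linarith
  -- derivative of F at 0
  have hD0 : HasDerivAt F (∫ w, deriv Ψ (0 + w) * p w) 0 :=
    pb_deriv p Ψ hp_meas hp_nonneg hpi hΨ_meas c₁ hΨ_bdd hΨ_diff c₂ hΨ'_bdd 0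
  have hDeq : (∫ w, deriv Ψ (0 + w) * p w) = ∫ w, deriv Ψ w * p w := by
    congr 1; ext w; rw [zero_add]
  set D : ℝ := ∫ w, deriv Ψ w * p w with hDdef
  rw [hDeq] at hD0
  have hDpos : 0 < D :=
    pb_D_pos p Ψ hp_meas hp_nonneg hpi hΨ_odd hΨ_pos hΨ_mono hΨ_diff c₂ hΨ'_bdd c hc hp_pos
  -- continuity of F
  have hFcont : Continuous F := by
    rw [continuous_iff_continuousAt]
    intro x
    exact (pb_deriv p Ψ hp_meas hp_nonneg hpi hΨ_meas c₁ hΨ_bdd hΨ_diff c₂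
      hΨ'_bdd x).continuousAt
  -- slope bound near 0
  rw [hasDerivAt_iff_tendsto_slope] at hD0
  obtain ⟨δ, hδ, hball⟩ := Metric.tendsto_nhdsWithin_nhds.mp hD0 (D / 2) (half_pos hDpos)
  -- min of F on [min δ g, g]
  set δ' : ℝ := min δ g with hδ'def
  have hδ'pos : 0 < δ' := lt_min hδ hg
  have hδ'g : δ' ≤ g := min_le_right _ _
  obtain ⟨x₀, hx₀mem, hx₀min⟩ :=
    isCompact_Icc.exists_isMinOn (Set.nonempty_Icc.2 hδ'g) hFcont.continuousOn
  have hm : 0 < F x₀ := hFpos x₀ (lt_of_lt_of_le hδ'pos hx₀mem.1)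
  refine ⟨min (D / 2) (F x₀ / g), lt_min (half_pos hDpos) (div_pos hm hg), ?_⟩
  intro a ha hag
  set K : ℝ := min (D / 2) (F x₀ / g) with hKdef
  set b : ℝ := |a| with hbdef
  have hb : 0 < b := ha
  -- |φ a| = F b
  have hFb : 0 < F b := hFpos b hb
  have habs : |φ a| = F b := by
    rcases abs_cases a with ⟨h1, _⟩ | ⟨h1, h2⟩
    · have hba : a = b := by rw [hbdef, h1]
      rw [hφF, hba, abs_of_pos hFb]
    · have : a = -b := by rw [hbdef, h1]; ring
      rw [hφF, this, hFodd, abs_neg, abs_of_pos hFb]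
  rw [habs]
  rcases lt_or_ge b δ with hcase | hcase
  · -- near zero: use slope
    have hmem : b ∈ {x : ℝ | x ≠ 0} := hb.ne'
    have := hball hmem (by rw [Real.dist_eq, sub_zero, abs_of_pos hb]; exact hcase)
    rw [Real.dist_eq, slope_def_field, hF0, sub_zero, sub_zero] at this
    have h2 : D / 2 < F b / b := by
      have := abs_lt.mp this
      linarith [this.1]
    have h3 : D / 2 * b < F b := (lt_div_iff₀ hb).mp h2
    have h4 : K * b ≤ D / 2 * b := mul_le_mul_of_nonneg_right (min_le_left _ _) hb.le
    linarith
  · -- away from zero: use compact minimum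
    have hbmem : b ∈ Set.Icc δ' g := ⟨le_trans (min_le_left _ _) hcase, hag⟩
    have h1 : F x₀ ≤ F b := hx₀min hbmem
    have h2 : K * b ≤ F x₀ / g * g :=
      mul_le_mul (min_le_right _ _) hag hb.le (div_pos hm hg).le
    rw [div_mul_cancel₀ _ hg.ne'] at h2
    linarith
end

section
/- Let (v_t) be a real sequence satisfying v_{t+1} = (1 − p/(t+1)^δ) v_t + q/(t+1)^δ for all t ≥ t₀, where p, q > 0, 0 < δ ≤ 1, t₀ is a natural number with v_{t₀} ≥ 0, and p/(t+1)^δ ≤ 1 for all t ≥ t₀. Then v_t converges and lim_{t→∞} v_t = q/p. -/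
open Filter

/-- If `v_{t+1} = (1 − p/(t+1)^δ) v_t + q/(t+1)^δ` for all `t ≥ t₀`, where
`p, q > 0`, `0 < δ ≤ 1`, `v_{t₀} ≥ 0` and `p/(t+1)^δ ≤ 1` for all `t ≥ t₀`,
then `v_t → q/p`. -/
theorem seq_tendsto_q_div_p (v : ℕ → ℝ) (p q δ : ℝ) (t₀ : ℕ)
    (hp : 0 < p) (hq : 0 < q) (hδ0 : 0 < δ) (hδ1 : δ ≤ 1)
    (hv0 : 0 ≤ v t₀)
    (hsmall : ∀ t : ℕ, t₀ ≤ t → p / ((t : ℝ) + 1) ^ δ ≤ 1)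
    (hrec : ∀ t : ℕ, t₀ ≤ t →
      v (t + 1) = (1 - p / ((t : ℝ) + 1) ^ δ) * v t + q / ((t : ℝ) + 1) ^ δ) :
    Tendsto v atTop (nhds (q / p)) := by
  set a : ℕ → ℝ := fun t => p / ((t : ℝ) + 1) ^ δ with ha
  have hbase : ∀ t : ℕ, (0:ℝ) < ((t : ℝ) + 1) ^ δ := fun t =>
    Real.rpow_pos_of_pos (by positivity) δ
  have hapos : ∀ t, 0 < a t := fun t => div_pos hp (hbase t)
  -- key recursive bound
  have key : ∀ t, t₀ ≤ t →
      |v t - q / p| ≤ |v t₀ - q / p| * Real.exp (-(∑ s ∈ Finset.Ico t₀ t, a s)) := by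
    intro t ht
    induction t, ht using Nat.le_induction with
    | base => simp
    | succ t ht ih =>
      have hx : ((t : ℝ) + 1) ^ δ ≠ 0 := (hbase t).ne'
      have hstep : v (t + 1) - q / p = (1 - a t) * (v t - q / p) := by
        rw [hrec t ht, ha]
        field_simp
        ring
      have h1a : 0 ≤ 1 - a t := by
        have := hsmall t ht
        simp only [ha]
        linarith
      have habs : |v (t + 1) - q / p| = (1 - a t) * |v t - q / p| := by
        rw [hstep, abs_mul, abs_of_nonneg h1a]
      have hexp : 1 - a t ≤ Real.exp (-(a t)) := by
        have := Real.add_one_le_exp (-(a t))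
        linarith
      calc |v (t + 1) - q / p| = (1 - a t) * |v t - q / p| := habs
        _ ≤ Real.exp (-(a t)) * (|v t₀ - q / p| * Real.exp (-(∑ s ∈ Finset.Ico t₀ t, a s))) := by
            apply mul_le_mul hexp ih (abs_nonneg _) (Real.exp_nonneg _)
        _ = |v t₀ - q / p| * Real.exp (-(∑ s ∈ Finset.Ico t₀ (t + 1), a s)) := by
            rw [Finset.sum_Ico_succ_top ht, neg_add, Real.exp_add]
            ring
  -- the sums tend to infinity
  have hsum : Tendsto (fun t => ∑ s ∈ Finset.Ico t₀ t, a s) atTop atTop := by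
    have hH : Tendsto (fun n => ∑ i ∈ Finset.range n, (1 / ((i : ℝ) + 1))) atTop atTop :=
      Real.tendsto_sum_range_one_div_nat_succ_atTop
    have hH' : Tendsto (fun n => p * ((∑ i ∈ Finset.range n, (1 / ((i : ℝ) + 1)))
        - ∑ i ∈ Finset.range t₀, (1 / ((i : ℝ) + 1)))) atTop atTop := by
      apply Tendsto.const_mul_atTop hp
      exact tendsto_atTop_add_const_right _ _ hH
    apply tendsto_atTop_mono' _ _ hH'
    filter_upwards [eventually_ge_atTop t₀] with t ht
    have : ∀ s ∈ Finset.Ico t₀ t, p * (1 / ((s : ℝ) + 1)) ≤ a s := by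
      intro s _
      have h1 : (1:ℝ) ≤ (s : ℝ) + 1 := by linarith [Nat.cast_nonneg (α := ℝ) s]
      have hle : ((s : ℝ) + 1) ^ δ ≤ ((s : ℝ) + 1) := by
        calc ((s : ℝ) + 1) ^ δ ≤ ((s : ℝ) + 1) ^ (1:ℝ) :=
              Real.rpow_le_rpow_of_exponent_le h1 hδ1
          _ = (s : ℝ) + 1 := Real.rpow_one _
      have : p / ((s : ℝ) + 1) ≤ p / ((s : ℝ) + 1) ^ δ :=
        div_le_div_of_nonneg_left hp.le (hbase s) hle
      calc p * (1 / ((s : ℝ) + 1)) = p / ((s : ℝ) + 1) := by ring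
        _ ≤ a s := this
    calc p * ((∑ i ∈ Finset.range t, (1 / ((i : ℝ) + 1)))
          - ∑ i ∈ Finset.range t₀, (1 / ((i : ℝ) + 1)))
        = ∑ s ∈ Finset.Ico t₀ t, p * (1 / ((s : ℝ) + 1)) := by
          rw [← Finset.sum_Ico_eq_sub _ ht, Finset.mul_sum]
      _ ≤ ∑ s ∈ Finset.Ico t₀ t, a s := Finset.sum_le_sum this
  -- bound tends to zero
  have hbound : Tendsto (fun t => |v t₀ - q / p| * Real.exp (-(∑ s ∈ Finset.Ico t₀ t, a s)))
      atTop (nhds 0) := by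
    rw [show (0:ℝ) = |v t₀ - q / p| * 0 by ring]
    exact Tendsto.const_mul _ (Real.tendsto_exp_neg_atTop_nhds_zero.comp hsum)
  have habs0 : Tendsto (fun t => |v t - q / p|) atTop (nhds 0) := by
    apply squeeze_zero' (Eventually.of_forall fun t => abs_nonneg _) _ hbound
    filter_upwards [eventually_ge_atTop t₀] with t ht using key t ht
  rw [tendsto_iff_norm_sub_tendsto_zero]
  simpa [Real.norm_eq_abs] using habs0
end

section
/- Let (u_t), (v_t), (r_t) be real sequences, let t₀ ≥ 1 be a natural number, and let p, q > 0 be constants with p/(t+1) ≤ 1 for all t ≥ t₀. Suppose that for all t ≥ t₀: u_{t+1} ≤ (1 − p/(t+1)) u_t + q/(t+1), v_{t+1} = (1 − p/(t+1)) v_t + q/(t+1), and r_t = v_t − q/p. If u_{t₀} ≤ v_{t₀}, then for all t ≥ t₀ one has u_t ≤ v_t = r_t + q/p, and there exists a constant C > 0 such that |r_t| ≤ C t^{−p} for all t ≥ t₀ with t ≥ 1 (i.e., r_t = O(1/t^p)). -/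
lemma key_ineq (p a : ℝ) (hp : 0 < p) (ha : 1 ≤ a) (hpa : p / a ≤ 1) :
    (1 - p / a) * a ^ (-p) ≤ (a + 1) ^ (-p) := by
  have ha0 : (0:ℝ) < a := by linarith
  have ha1 : (0:ℝ) < a + 1 := by linarith
  rcases le_or_gt (1 - p / a) 0 with h | h
  · have : (0:ℝ) < (a + 1) ^ (-p) := Real.rpow_pos_of_pos ha1 _
    have hra : (0:ℝ) < a ^ (-p) := Real.rpow_pos_of_pos ha0 _
    nlinarith
  · have hstep : 1 - p / a ≤ (a / (a + 1)) ^ p := by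
      have hd : (0:ℝ) < a / (a + 1) := by positivity
      have hlog1 : Real.log (1 - p / a) ≤ -(p / a) :=
        le_trans (Real.log_le_sub_one_of_pos h) (le_of_eq (by ring))
      have hlog2 : Real.log ((a + 1) / a) ≤ 1 / a := by
        have := Real.log_le_sub_one_of_pos (show (0:ℝ) < (a+1)/a by positivity)
        have : Real.log ((a+1)/a) ≤ (a+1)/a - 1 := this
        have heq : (a+1)/a - 1 = 1/a := by field_simp; ring
        linarith [heq ▸ this]
      have hda : a / (a + 1) = ((a + 1) / a)⁻¹ := by field_simp
      have hlog3 : Real.log (a / (a + 1)) = -Real.log ((a + 1) / a) := by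
        rw [hda, Real.log_inv]
      have : Real.log (1 - p / a) ≤ p * Real.log (a / (a + 1)) := by
        rw [hlog3]
        have : p * Real.log ((a+1)/a) ≤ p * (1/a) :=
          mul_le_mul_of_nonneg_left hlog2 hp.le
        have hpa' : p * (1/a) = p / a := by ring
        nlinarith
      calc 1 - p / a = Real.exp (Real.log (1 - p / a)) := (Real.exp_log h).symm
        _ ≤ Real.exp (p * Real.log (a / (a + 1))) := Real.exp_le_exp.mpr this
        _ = (a / (a + 1)) ^ p := by rw [Real.rpow_def_of_pos hd, mul_comm]
    have hmul : (a / (a + 1)) ^ p * a ^ (-p) = (a + 1) ^ (-p) := by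
      rw [Real.div_rpow ha0.le ha1.le, Real.rpow_neg ha0.le, Real.rpow_neg ha1.le]
      have h1 : (0:ℝ) < a ^ p := Real.rpow_pos_of_pos ha0 _
      have h2 : (0:ℝ) < (a+1) ^ p := Real.rpow_pos_of_pos ha1 _
      field_simp
    have hra : (0:ℝ) ≤ a ^ (-p) := (Real.rpow_pos_of_pos ha0 _).le
    calc (1 - p / a) * a ^ (-p) ≤ (a / (a + 1)) ^ p * a ^ (-p) :=
          mul_le_mul_of_nonneg_right hstep hra
      _ = (a + 1) ^ (-p) := hmul

/-- Comparison lemma: if `u_{t+1} ≤ (1 − p/(t+1)) u_t + q/(t+1)`,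
`v_{t+1} = (1 − p/(t+1)) v_t + q/(t+1)` and `r_t = v_t − q/p` for `t ≥ t₀`,
with `u_{t₀} ≤ v_{t₀}`, then `u_t ≤ v_t = r_t + q/p` for all `t ≥ t₀` and
`r_t = O(1/t^p)`. -/
theorem comparison_sequences (u v r : ℕ → ℝ) (t₀ : ℕ) (p q : ℝ)
    (ht₀ : 1 ≤ t₀) (hp : 0 < p) (hq : 0 < q)
    (hsmall : ∀ t : ℕ, t₀ ≤ t → p / ((t : ℝ) + 1) ≤ 1)
    (hu : ∀ t : ℕ, t₀ ≤ t →
      u (t + 1) ≤ (1 - p / ((t : ℝ) + 1)) * u t + q / ((t : ℝ) + 1))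
    (hv : ∀ t : ℕ, t₀ ≤ t →
      v (t + 1) = (1 - p / ((t : ℝ) + 1)) * v t + q / ((t : ℝ) + 1))
    (hr : ∀ t : ℕ, t₀ ≤ t → r t = v t - q / p)
    (hinit : u t₀ ≤ v t₀) :
    (∀ t : ℕ, t₀ ≤ t → u t ≤ v t ∧ v t = r t + q / p) ∧
      ∃ C : ℝ, 0 < C ∧ ∀ t : ℕ, t₀ ≤ t → 1 ≤ t → |r t| ≤ C * (t : ℝ) ^ (-p) := by
  have huv : ∀ t : ℕ, t₀ ≤ t → u t ≤ v t := by
    intro t ht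
    induction t with
    | zero => omega
    | succ n ih =>
      rcases Nat.lt_or_ge n t₀ with h | h
      · have : t₀ = n + 1 := by omega
        exact this ▸ hinit
      · have h1 := hsmall n h
        have h0 : (0:ℝ) ≤ 1 - p / ((n:ℝ) + 1) := by linarith
        have ihn := ih h
        calc u (n+1) ≤ (1 - p / ((n:ℝ)+1)) * u n + q / ((n:ℝ)+1) := hu n h
          _ ≤ (1 - p / ((n:ℝ)+1)) * v n + q / ((n:ℝ)+1) := by nlinarith
          _ = v (n+1) := (hv n h).symm
  have hrr : ∀ t : ℕ, t₀ ≤ t → r (t + 1) = (1 - p / ((t:ℝ) + 1)) * r t := by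
    intro t ht
    have h1 := hr t ht
    have h2 := hr (t+1) (le_trans ht (Nat.le_succ t))
    have h3 := hv t ht
    have hne : ((t:ℝ) + 1) ≠ 0 := by positivity
    rw [h2, h3, h1]
    field_simp
    ring
  refine ⟨fun t ht => ⟨huv t ht, by rw [hr t ht]; ring⟩, ?_⟩
  set B : ℝ := (|r t₀| + 1) * ((t₀:ℝ) + 1) ^ p with hB
  have hBpos : 0 < B := by positivity
  have hbase : B * ((t₀:ℝ) + 1) ^ (-p) = |r t₀| + 1 := by
    rw [hB, mul_assoc, ← Real.rpow_add (by positivity), add_neg_cancel,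
      Real.rpow_zero, mul_one]
  have hbound : ∀ t : ℕ, t₀ ≤ t → |r t| ≤ B * ((t:ℝ) + 1) ^ (-p) := by
    intro t ht
    induction t with
    | zero => omega
    | succ n ih =>
      rcases Nat.lt_or_ge n t₀ with h | h
      · have he : t₀ = n + 1 := by omega
        rw [← he, hbase]
        linarith [abs_nonneg (r t₀)]
      · have ihn := ih h
        have h1 := hsmall n h
        have h0 : (0:ℝ) ≤ 1 - p / ((n:ℝ) + 1) := by linarith
        have hrec := hrr n h
        have ha1 : (1:ℝ) ≤ (n:ℝ) + 1 := by
          have : (0:ℝ) ≤ (n:ℝ) := Nat.cast_nonneg n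
          linarith
        have hkey := key_ineq p ((n:ℝ)+1) hp ha1 h1
        have habs : |r (n+1)| = (1 - p / ((n:ℝ)+1)) * |r n| := by
          rw [hrec, abs_mul, abs_of_nonneg h0]
        push_cast
        calc |r (n+1)| = (1 - p / ((n:ℝ)+1)) * |r n| := habs
          _ ≤ (1 - p / ((n:ℝ)+1)) * (B * ((n:ℝ) + 1) ^ (-p)) :=
              mul_le_mul_of_nonneg_left ihn h0
          _ = B * ((1 - p / ((n:ℝ)+1)) * ((n:ℝ) + 1) ^ (-p)) := by ring
          _ ≤ B * (((n:ℝ) + 1 + 1) ^ (-p)) :=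
              mul_le_mul_of_nonneg_left hkey hBpos.le
          _ = B * (((n:ℝ) + 1 + 1) ^ (-p)) := rfl
  refine ⟨B, hBpos, fun t ht ht1 => ?_⟩
  have h1 : |r t| ≤ B * ((t:ℝ) + 1) ^ (-p) := hbound t ht
  have htpos : (0:ℝ) < (t:ℝ) := by exact_mod_cast ht1
  have h2 : ((t:ℝ) + 1) ^ (-p) ≤ (t:ℝ) ^ (-p) := by
    apply Real.rpow_le_rpow_of_nonpos htpos (by linarith) (by linarith)
  calc |r t| ≤ B * ((t:ℝ) + 1) ^ (-p) := h1
    _ ≤ B * (t:ℝ) ^ (-p) := mul_le_mul_of_nonneg_left h2 hBpos.le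
end

section
/- Let F : ℝ^n → ℝ be twice continuously differentiable and suppose there are constants 0 < μ ≤ L < ∞ such that for every x ∈ ℝ^n and every v ∈ ℝ^n, μ‖v‖² ≤ ⟨v, ∇²F(x) v⟩ ≤ L‖v‖². Then for every step size α with 0 ≤ α ≤ 1/L and every x, y ∈ ℝ^n, ‖(x − α∇F(x)) − (y − α∇F(y))‖ ≤ (1 − αμ)‖x − y‖. -/
open InnerProductSpace

/-- Pointwise operator bound: if `H` is symmetric with `μ ≤ H ≤ L` in the quadratic-form
sense, then `‖v - α • H v‖ ≤ (1 - α μ) ‖v‖` for `0 ≤ α`, `α L ≤ 1`. -/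
lemma key_vec {E : Type*} [NormedAddCommGroup E] [InnerProductSpace ℝ E]
    (H : E →L[ℝ] E) (μ L α : ℝ) (hμL : μ ≤ L)
    (hsymm : ∀ u v : E, (inner ℝ u (H v) : ℝ) = inner ℝ v (H u))
    (hlo : ∀ v : E, μ * ‖v‖ ^ 2 ≤ inner ℝ v (H v))
    (hhi : ∀ v : E, (inner ℝ v (H v) : ℝ) ≤ L * ‖v‖ ^ 2)
    (hα0 : 0 ≤ α) (hαL : α * L ≤ 1) (v : E) :
    ‖v - α • H v‖ ≤ (1 - α * μ) * ‖v‖ := by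
  -- bilinear form B u w = ⟪u, H w⟫ - μ ⟪u, w⟫
  set B : E → E → ℝ := fun u w => (inner ℝ u (H w) : ℝ) - μ * inner ℝ u w with hB
  have hBsymm : ∀ u w, B u w = B w u := by
    intro u w
    simp only [hB, hsymm u w, real_inner_comm u w]
  have hBq0 : ∀ u, 0 ≤ B u u := by
    intro u
    have := hlo u
    simp only [hB, real_inner_self_eq_norm_sq]
    linarith
  have hBq1 : ∀ u, B u u ≤ (L - μ) * ‖u‖ ^ 2 := by
    intro u
    have := hhi u
    simp only [hB, real_inner_self_eq_norm_sq]
    ring_nf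
    nlinarith
  -- expansion
  have hexp : ∀ (u w : E) (t : ℝ), B (u + t • w) (u + t • w)
      = B w w * (t * t) + (2 * B u w) * t + B u u := by
    intro u w t
    simp only [hB, inner_add_left, inner_add_right, inner_smul_left, inner_smul_right, map_add,
      map_smul, ContinuousLinearMap.add_apply, ContinuousLinearMap.smul_apply,
      RCLike.inner_apply, conj_trivial]
    rw [← hsymm u w, real_inner_comm w u]
    ring
  -- Cauchy-Schwarz for B
  have hCS : ∀ u w : E, B u w ^ 2 ≤ B u u * B w w := by
    intro u w
    have h := discrim_le_zero (a := B w w) (b := 2 * B u w) (c := B u u) (fun t => by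
      rw [← hexp u w t]; exact hBq0 _)
    rw [discrim] at h
    nlinarith
  -- step 2
  set w : E := H v - μ • v with hw
  have hwB : ∀ u : E, B u v = inner ℝ u w := by
    intro u
    simp [hB, hw, inner_sub_right, inner_smul_right]
  have hBwv : B w v = ‖w‖ ^ 2 := by rw [hwB, real_inner_self_eq_norm_sq]
  have h4 : (‖w‖ ^ 2) ^ 2 ≤ ((L - μ) * ‖w‖ ^ 2) * B v v := by
    have := hCS w v
    rw [hBwv] at this
    exact this.trans (mul_le_mul_of_nonneg_right (hBq1 w) (hBq0 v))
  have hstep2 : ‖w‖ ^ 2 ≤ (L - μ) * B v v := by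
    rcases eq_or_lt_of_le (sq_nonneg ‖w‖) with h0 | h0
    · rw [← h0]; exact mul_nonneg (by linarith) (hBq0 v)
    · nlinarith
  -- step 3
  have hrw : v - α • H v = (1 - α * μ) • v - α • w := by
    rw [hw]; module
  have hvw : (inner ℝ v w : ℝ) = B v v := (hwB v).symm
  have hn : ‖(1 - α * μ) • v - α • w‖ ^ 2
      = (1 - α * μ) ^ 2 * ‖v‖ ^ 2 - 2 * ((1 - α * μ) * α * B v v) + α ^ 2 * ‖w‖ ^ 2 := by
    rw [← hvw, norm_sub_sq_real, inner_smul_left, inner_smul_right, norm_smul, norm_smul,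
      mul_pow, mul_pow]
    simp only [RCLike.inner_apply, conj_trivial, Real.norm_eq_abs, sq_abs]
    ring
  have h1αμ : 0 ≤ 1 - α * μ := by nlinarith
  have hsq : ‖v - α • H v‖ ^ 2 ≤ ((1 - α * μ) * ‖v‖) ^ 2 := by
    rw [hrw, hn]
    have hq := hBq0 v
    have key : α ^ 2 * ‖w‖ ^ 2 ≤ 2 * ((1 - α * μ) * α * B v v) := by
      have h5 : α ^ 2 * ‖w‖ ^ 2 ≤ α ^ 2 * ((L - μ) * B v v) :=
        mul_le_mul_of_nonneg_left hstep2 (sq_nonneg α)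
      have h6 : 0 ≤ (2 - α * L - α * μ) * (α * B v v) := by
        apply mul_nonneg _ (mul_nonneg hα0 hq)
        nlinarith
      nlinarith
    nlinarith
  have := Real.sqrt_le_sqrt hsq
  rwa [Real.sqrt_sq (norm_nonneg _), Real.sqrt_sq (mul_nonneg h1αμ (norm_nonneg v))] at this

/-- Generic version of the contraction theorem. -/
lemma grad_step_aux {E : Type*} [NormedAddCommGroup E] [InnerProductSpace ℝ E] [CompleteSpace E]
    (F : E → ℝ) (μ L : ℝ)
    (hμ : 0 < μ) (hμL : μ ≤ L)
    (hF : ContDiff ℝ 2 F)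
    (hHess : ∀ x v : E,
      μ * ‖v‖ ^ 2 ≤ (inner ℝ v (fderiv ℝ (gradient F) x v) : ℝ) ∧
      (inner ℝ v (fderiv ℝ (gradient F) x v) : ℝ) ≤ L * ‖v‖ ^ 2) :
    ∀ α : ℝ, 0 ≤ α → α ≤ 1 / L →
      ∀ x y : E,
        ‖(x - α • gradient F x) - (y - α • gradient F y)‖ ≤
          (1 - α * μ) * ‖x - y‖ := by
  have hL : 0 < L := hμ.trans_le hμL
  have hD : ContDiff ℝ 1 (fderiv ℝ F) := hF.fderiv_right (by norm_num)
  set e : StrongDual ℝ E ≃L[ℝ] E :=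
    (InnerProductSpace.toDual ℝ E).symm.toContinuousLinearEquiv with he
  have hgradeq : gradient F = fun y => e (fderiv ℝ F y) := rfl
  have hgrad : ∀ z : E, HasFDerivAt (gradient F)
      ((e : StrongDual ℝ E →L[ℝ] E) ∘L fderiv ℝ (fderiv ℝ F) z) z := by
    intro z
    rw [hgradeq]
    exact ((e : StrongDual ℝ E →L[ℝ] E).hasFDerivAt).comp z
      ((hD.differentiable one_ne_zero z).hasFDerivAt)
  have hHformula : ∀ z : E, fderiv ℝ (gradient F) z
      = (e : StrongDual ℝ E →L[ℝ] E) ∘L fderiv ℝ (fderiv ℝ F) z :=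
    fun z => (hgrad z).fderiv
  have hinner : ∀ (z u v : E),
      (inner ℝ u (fderiv ℝ (gradient F) z v) : ℝ) = fderiv ℝ (fderiv ℝ F) z v u := by
    intro z u v
    rw [hHformula z]
    simp only [ContinuousLinearMap.coe_comp', Function.comp_apply, he,
      ContinuousLinearEquiv.coe_coe, LinearIsometryEquiv.coe_toContinuousLinearEquiv]
    rw [real_inner_comm, InnerProductSpace.toDual_symm_apply]
  have hsymm : ∀ (z u v : E),
      (inner ℝ u (fderiv ℝ (gradient F) z v) : ℝ) = inner ℝ v (fderiv ℝ (gradient F) z u) := by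
    intro z u v
    have hs := hF.contDiffAt (x := z) |>.isSymmSndFDerivAt (by simp)
    rw [hinner, hinner, hs v u]
  intro α hα0 hα1 x y
  have hαL : α * L ≤ 1 := by
    rw [le_div_iff₀ hL] at hα1; linarith
  have h1αμ : 0 ≤ 1 - α * μ := by nlinarith [mul_le_mul_of_nonneg_left hμL hα0]
  have key := fun z v => key_vec (fderiv ℝ (gradient F) z) μ L α hμL (hsymm z)
    (fun v => (hHess z v).1) (fun v => (hHess z v).2) hα0 hαL v
  have hdiff : ∀ z ∈ (Set.univ : Set E),
      DifferentiableAt ℝ (fun z : E => z - α • gradient F z) z := by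
    intro z _
    exact (differentiableAt_id).sub (((hgrad z).differentiableAt).const_smul α)
  have hbound : ∀ z ∈ (Set.univ : Set E),
      ‖fderiv ℝ (fun z : E => z - α • gradient F z) z‖ ≤ 1 - α * μ := by
    intro z _
    have hfd : HasFDerivAt (fun z : E => z - α • gradient F z)
        (ContinuousLinearMap.id ℝ E - α • fderiv ℝ (gradient F) z) z :=
      (hasFDerivAt_id z).sub ((hgrad z).const_smul α |>.congr_fderiv (by
        rw [hHformula z]))
    rw [hfd.fderiv]
    refine ContinuousLinearMap.opNorm_le_bound _ h1αμ fun v => ?_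
    simpa using key z v
  exact Convex.norm_image_sub_le_of_norm_fderiv_le hdiff hbound convex_univ
    (Set.mem_univ y) (Set.mem_univ x)

/-- If `F : ℝⁿ → ℝ` is twice continuously differentiable with
`μ‖v‖² ≤ ⟨v, ∇²F(x)v⟩ ≤ L‖v‖²` for all `x, v`, then the gradient step map
`x ↦ x − α∇F(x)` is a `(1 − αμ)`-contraction for any `0 ≤ α ≤ 1/L`. -/
theorem gradient_step_contraction (n : ℕ)
    (F : EuclideanSpace ℝ (Fin n) → ℝ) (μ L : ℝ)
    (hμ : 0 < μ) (hμL : μ ≤ L)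
    (hF : ContDiff ℝ 2 F)
    (hHess : ∀ x v : EuclideanSpace ℝ (Fin n),
      μ * ‖v‖ ^ 2 ≤ (inner ℝ v (fderiv ℝ (gradient F) x v) : ℝ) ∧
      (inner ℝ v (fderiv ℝ (gradient F) x v) : ℝ) ≤ L * ‖v‖ ^ 2) :
    ∀ α : ℝ, 0 ≤ α → α ≤ 1 / L →
      ∀ x y : EuclideanSpace ℝ (Fin n),
        ‖(x - α • gradient F x) - (y - α • gradient F y)‖ ≤
          (1 - α * μ) * ‖x - y‖ :=
  grad_step_aux F μ L hμ hμL hF hHess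
end

section
/- Consider the distributed iteration x_i^{t+1} = x_i^t − β_t ∑_{j∈Ω_i} Ψ(x_i^t − x_j^t + ξ_{ij}^t) − α_t ∇f_i(x_i^t) with α_t = a/(t+1) and β_t = b/(t+1)^δ, where a, b > 0, δ ∈ (1/2, 1), the vectors ξ_{ij}^t ∈ ℝ^M are arbitrary (no probabilistic assumption), and |Ψ(u)| ≤ c₁ for all u ∈ ℝ for some c₁ > 0. Then there exist constants c', c'' > 0 such that for all t ≥ 1, the stacked iterate x^t = (x_1^t, …, x_N^t) ∈ ℝ^{NM} satisfies ‖x^t − 1_N ⊗ x*‖ ≤ c' + c'' t^{1−δ}, where x* is the unique minimizer of ∑_{i=1}^N f_i. In particular the bound holds surely, for every realization of the noise. -/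
open Filter
set_option maxHeartbeats 1000000

/-- The componentwise application of a scalar nonlinearity `Ψ : ℝ → ℝ`
to a vector in `ℝ^M`. -/
noncomputable def compPsi (M : ℕ) (Ψ : ℝ → ℝ) (v : EuclideanSpace ℝ (Fin M)) :
    EuclideanSpace ℝ (Fin M) :=
  (WithLp.equiv 2 (Fin M → ℝ)).symm (fun k => Ψ ((WithLp.equiv 2 (Fin M → ℝ)) v k))

section Aux

/-- The inner-product-space duality, as a plain real linear isometry equivalence. -/
noncomputable def dualIsoReal (E : Type*) [NormedAddCommGroup E] [InnerProductSpace ℝ E]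
    [CompleteSpace E] : StrongDual ℝ E ≃ₗᵢ[ℝ] E :=
  { toLinearEquiv :=
    { toFun := (InnerProductSpace.toDual ℝ E).symm
      map_add' := fun φ ψ => map_add _ φ ψ
      map_smul' := fun c φ => by
        simpa using map_smulₛₗ ((InnerProductSpace.toDual ℝ E).symm) c φ
      invFun := InnerProductSpace.toDual ℝ E
      left_inv := fun φ => (InnerProductSpace.toDual ℝ E).apply_symm_apply φ
      right_inv := fun x => (InnerProductSpace.toDual ℝ E).symm_apply_apply x }
    norm_map' := fun φ => (InnerProductSpace.toDual ℝ E).symm.norm_map φ }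

lemma dualIsoReal_apply {E : Type*} [NormedAddCommGroup E] [InnerProductSpace ℝ E]
    [CompleteSpace E] (φ : StrongDual ℝ E) :
    dualIsoReal E φ = (InnerProductSpace.toDual ℝ E).symm φ := rfl

/-- Partial sums of `1/(s+1)^δ` grow like `t^(1-δ)/(1-δ)`. -/
lemma helper_sum_rpow {δ : ℝ} (h0 : 0 < δ) (h1 : δ < 1) (t : ℕ) :
    ∑ s ∈ Finset.range t, 1 / ((s : ℝ) + 1) ^ δ ≤ (t : ℝ) ^ (1 - δ) / (1 - δ) := by
  have h1d : (0:ℝ) < 1 - δ := by linarith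
  induction t with
  | zero =>
    simp [Real.zero_rpow (by linarith : (1:ℝ) - δ ≠ 0)]
  | succ t ih =>
    have ht0 : (0:ℝ) ≤ (t : ℝ) := Nat.cast_nonneg t
    have hlt : (t : ℝ) < (t : ℝ) + 1 := by linarith
    obtain ⟨c, hc, hc'⟩ := exists_hasDerivAt_eq_slope (fun x : ℝ => x ^ (1 - δ))
      (fun x : ℝ => (1 - δ) * x ^ (1 - δ - 1)) hlt
      (fun x _ => (Real.continuousAt_rpow_const x (1 - δ) (Or.inr h1d.le)).continuousWithinAt)
      (fun x hx => Real.hasDerivAt_rpow_const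
        (Or.inl (ne_of_gt (lt_of_le_of_lt ht0 hx.1))))
    have hcpos : 0 < c := lt_of_le_of_lt ht0 hc.1
    have hden : ((t : ℝ) + 1) - (t : ℝ) = 1 := by ring
    rw [hden, div_one] at hc'
    have hexp : (1 : ℝ) - δ - 1 = -δ := by ring
    rw [hexp] at hc'
    have hkey : ((t : ℝ) + 1) ^ (1 - δ) - (t : ℝ) ^ (1 - δ) = (1 - δ) * c ^ (-δ) := hc'.symm
    have hstep : 1 / ((t : ℝ) + 1) ^ δ ≤ c ^ (-δ) := by
      have h1 : c ^ δ ≤ ((t : ℝ) + 1) ^ δ := Real.rpow_le_rpow hcpos.le hc.2.le h0.le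
      have h2 : (0:ℝ) < c ^ δ := Real.rpow_pos_of_pos hcpos δ
      rw [Real.rpow_neg hcpos.le, inv_eq_one_div]
      exact one_div_le_one_div_of_le h2 h1
    rw [Finset.sum_range_succ]
    have hcast : ((t + 1 : ℕ) : ℝ) = (t : ℝ) + 1 := by push_cast; ring
    rw [hcast]
    have hgoal : ((t : ℝ) + 1) ^ (1 - δ) / (1 - δ) =
        (t : ℝ) ^ (1 - δ) / (1 - δ) + c ^ (-δ) := by
      rw [div_eq_iff (ne_of_gt h1d), add_mul, div_mul_cancel₀ _ (ne_of_gt h1d)]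
      linarith [hkey]
    rw [hgoal]
    exact add_le_add ih hstep

/-- Norm bound for the componentwise nonlinearity. -/
lemma compPsi_norm {M : ℕ} {Ψ : ℝ → ℝ} {c₁ : ℝ} (hc : 0 ≤ c₁) (hΨ : ∀ u, |Ψ u| ≤ c₁)
    (v : EuclideanSpace ℝ (Fin M)) : ‖compPsi M Ψ v‖ ≤ Real.sqrt M * c₁ := by
  rw [EuclideanSpace.norm_eq]
  have hsum : ∑ k : Fin M, ‖compPsi M Ψ v k‖ ^ 2 ≤ ∑ _k : Fin M, c₁ ^ 2 := by
    refine Finset.sum_le_sum (fun k _ => ?_)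
    have h1 : ‖compPsi M Ψ v k‖ = |Ψ (v k)| := by
      simp [compPsi, Real.norm_eq_abs]
    rw [h1]
    have := hΨ (v k)
    nlinarith [abs_nonneg (Ψ (v k))]
  have hsum2 : ∑ _k : Fin M, (c₁ : ℝ) ^ 2 = (M : ℝ) * c₁ ^ 2 := by
    simp [Finset.sum_const, Finset.card_univ]
  calc Real.sqrt (∑ k : Fin M, ‖compPsi M Ψ v k‖ ^ 2)
      ≤ Real.sqrt ((M : ℝ) * c₁ ^ 2) := Real.sqrt_le_sqrt (by rw [← hsum2]; exact hsum)
    _ = Real.sqrt M * c₁ := by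
        rw [Real.sqrt_mul (Nat.cast_nonneg M), Real.sqrt_sq hc]

/-- A symmetric positive operator whose quadratic form is bounded by `L‖v‖²`
has norm at most `L`. -/
lemma sym_op_bound {M : ℕ} (B : EuclideanSpace ℝ (Fin M) →L[ℝ] EuclideanSpace ℝ (Fin M))
    {L : ℝ} (hL : 0 ≤ L)
    (hsym : ∀ u v, (inner ℝ u (B v) : ℝ) = (inner ℝ v (B u) : ℝ))
    (h0 : ∀ v, 0 ≤ (inner ℝ v (B v) : ℝ))
    (hub : ∀ v, (inner ℝ v (B v) : ℝ) ≤ L * ‖v‖ ^ 2)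
    (v : EuclideanSpace ℝ (Fin M)) : ‖B v‖ ≤ L * ‖v‖ := by
  rcases eq_or_ne (B v) 0 with h | h
  · rw [h, norm_zero]; positivity
  have hv : v ≠ 0 := by rintro rfl; simp at h
  have hBv : 0 < ‖B v‖ := norm_pos_iff.mpr h
  have hvpos : 0 < ‖v‖ := norm_pos_iff.mpr hv
  set u := (‖v‖ / ‖B v‖) • B v with hu
  have hnu : ‖u‖ = ‖v‖ := by
    rw [hu, norm_smul, Real.norm_eq_abs, abs_of_nonneg (by positivity)]
    field_simp
  have huBv : (inner ℝ u (B v) : ℝ) = ‖v‖ * ‖B v‖ := by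
    rw [hu, real_inner_smul_left, real_inner_self_eq_norm_sq]
    field_simp
  have e1 : (inner ℝ (u + v) (B (u + v)) : ℝ) =
      (inner ℝ u (B u) : ℝ) + 2 * (inner ℝ u (B v) : ℝ) + (inner ℝ v (B v) : ℝ) := by
    rw [map_add]
    simp only [inner_add_left, inner_add_right]
    linarith [hsym u v]
  have e2 : (inner ℝ (u - v) (B (u - v)) : ℝ) =
      (inner ℝ u (B u) : ℝ) - 2 * (inner ℝ u (B v) : ℝ) + (inner ℝ v (B v) : ℝ) := by
    rw [map_sub]
    simp only [inner_sub_left, inner_sub_right]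
    linarith [hsym u v]
  have q1 := hub (u + v)
  have q2 := h0 (u - v)
  have hn : ‖u + v‖ ≤ 2 * ‖v‖ := by
    calc ‖u + v‖ ≤ ‖u‖ + ‖v‖ := norm_add_le _ _
      _ = 2 * ‖v‖ := by rw [hnu]; ring
  have hq : L * ‖u + v‖ ^ 2 ≤ L * (2 * ‖v‖) ^ 2 := by
    apply mul_le_mul_of_nonneg_left _ hL
    nlinarith [norm_nonneg (u + v)]
  have key : 4 * (‖v‖ * ‖B v‖) ≤ 4 * (L * ‖v‖ ^ 2) := by nlinarith
  nlinarith

/-- Discrete Gronwall-type recursion bound. -/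
lemma recursion_bound (r u κ : ℕ → ℝ) (hκ1 : ∀ t, 1 ≤ κ t) (hu : ∀ t, 0 ≤ u t)
    (hrec : ∀ t, r (t + 1) ≤ κ t * r t + u t) (t : ℕ) :
    r t ≤ (∏ s ∈ Finset.range t, κ s) * (r 0 + ∑ s ∈ Finset.range t, u s) := by
  induction t with
  | zero => simp
  | succ t ih =>
    have hκpos : ∀ s, (0:ℝ) ≤ κ s := fun s => le_trans zero_le_one (hκ1 s)
    have hProdOne : 1 ≤ ∏ s ∈ Finset.range (t + 1), κ s := by
      calc (1:ℝ) = ∏ _s ∈ Finset.range (t + 1), (1:ℝ) := by simp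
        _ ≤ ∏ s ∈ Finset.range (t + 1), κ s :=
          Finset.prod_le_prod (fun s _ => zero_le_one) (fun s _ => hκ1 s)
    calc r (t + 1) ≤ κ t * r t + u t := hrec t
      _ ≤ κ t * ((∏ s ∈ Finset.range t, κ s) * (r 0 + ∑ s ∈ Finset.range t, u s)) + u t := by
          exact add_le_add_left (mul_le_mul_of_nonneg_left ih (hκpos t)) _
      _ = (∏ s ∈ Finset.range (t + 1), κ s) * (r 0 + ∑ s ∈ Finset.range t, u s) + u t := by
          rw [Finset.prod_range_succ]; ring
      _ ≤ (∏ s ∈ Finset.range (t + 1), κ s) * (r 0 + ∑ s ∈ Finset.range t, u s)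
            + (∏ s ∈ Finset.range (t + 1), κ s) * u t := by
          exact add_le_add_right (le_mul_of_one_le_left (hu t) hProdOne) _
      _ = (∏ s ∈ Finset.range (t + 1), κ s) * (r 0 + ∑ s ∈ Finset.range (t + 1), u s) := by
          rw [Finset.sum_range_succ]; ring

end Aux

/-- Deterministic (per-realization) boundedness of the iterates of the
distributed algorithm: for arbitrary noise realizations `ξ`, the stacked
iterate satisfies `‖x^t − 1_N ⊗ x*‖ ≤ c' + c'' t^{1−δ}` for all `t ≥ 1`. -/
theorem iterates_bounded_surely (N M : ℕ) (hN : 0 < N)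
    (G : SimpleGraph (Fin N)) [DecidableRel G.Adj] (hGconn : G.Connected)
    (f : Fin N → EuclideanSpace ℝ (Fin M) → ℝ)
    (μ L : ℝ) (hμ : 0 < μ) (hμL : μ ≤ L)
    (hf : ∀ i, ContDiff ℝ 2 (f i))
    (hHess : ∀ (i : Fin N) (x v : EuclideanSpace ℝ (Fin M)),
      μ * ‖v‖ ^ 2 ≤ (inner ℝ v (fderiv ℝ (gradient (f i)) x v) : ℝ) ∧
      (inner ℝ v (fderiv ℝ (gradient (f i)) x v) : ℝ) ≤ L * ‖v‖ ^ 2)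
    (xstar : EuclideanSpace ℝ (Fin M))
    (hxstar : ∀ y, ∑ i, f i xstar ≤ ∑ i, f i y)
    (Ψ : ℝ → ℝ) (c₁ : ℝ) (hc₁ : 0 < c₁) (hΨ_bdd : ∀ u : ℝ, |Ψ u| ≤ c₁)
    (a b δ : ℝ) (ha : 0 < a) (hb : 0 < b) (hδ : 1 / 2 < δ) (hδ1 : δ < 1)
    (ξ : ℕ → Fin N → Fin N → EuclideanSpace ℝ (Fin M))
    (x : ℕ → Fin N → EuclideanSpace ℝ (Fin M))
    (hx : ∀ (t : ℕ) (i : Fin N),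
      x (t + 1) i = x t i
        - (b / ((t : ℝ) + 1) ^ δ) •
            (∑ j ∈ G.neighborFinset i, compPsi M Ψ (x t i - x t j + ξ t i j))
        - (a / ((t : ℝ) + 1)) • gradient (f i) (x t i)) :
    ∃ c' c'' : ℝ, 0 < c' ∧ 0 < c'' ∧
      ∀ t : ℕ, 1 ≤ t →
        Real.sqrt (∑ i, ‖x t i - xstar‖ ^ 2) ≤ c' + c'' * (t : ℝ) ^ (1 - δ) := by
  have hL0 : 0 < L := lt_of_lt_of_le hμ hμL
  have hδ0 : 0 < δ := by linarith
  have h1d : (0:ℝ) < 1 - δ := by linarith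
  -- smoothness of the gradients
  have hfd : ∀ i, ContDiff ℝ 1 (fderiv ℝ (f i)) := fun i =>
    (hf i).fderiv_right (by norm_num)
  have hgradC : ∀ i, ContDiff ℝ 1 (gradient (f i)) := by
    intro i
    have : gradient (f i) =
        (dualIsoReal (EuclideanSpace ℝ (Fin M))) ∘ (fderiv ℝ (f i)) := rfl
    rw [this]
    exact (dualIsoReal (EuclideanSpace ℝ (Fin M))).contDiff.comp (hfd i)
  have hgradDiff : ∀ i, Differentiable ℝ (gradient (f i)) := fun i =>
    (hgradC i).differentiable one_ne_zero
  have hfdDiff : ∀ i, Differentiable ℝ (fderiv ℝ (f i)) := fun i =>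
    (hfd i).differentiable one_ne_zero
  -- symmetry of the Hessian
  have hsym : ∀ (i : Fin N) (z u v : EuclideanSpace ℝ (Fin M)),
      (inner ℝ u (fderiv ℝ (gradient (f i)) z v) : ℝ) =
      (inner ℝ v (fderiv ℝ (gradient (f i)) z u) : ℝ) := by
    intro i z u v
    have hsecond : ∀ p q, fderiv ℝ (fderiv ℝ (f i)) z p q
        = fderiv ℝ (fderiv ℝ (f i)) z q p :=
      second_derivative_symmetric
        (fun y => ((hf i).differentiable two_ne_zero y).hasFDerivAt)
        ((hfdDiff i z).hasFDerivAt)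
    have hrep : ∀ w p, (inner ℝ w (fderiv ℝ (gradient (f i)) z p) : ℝ)
        = fderiv ℝ (fderiv ℝ (f i)) z p w := by
      intro w p
      have hA : HasFDerivAt (fun y => (inner ℝ w (gradient (f i) y) : ℝ))
          ((innerSL ℝ w).comp (fderiv ℝ (gradient (f i)) z)) z :=
        (innerSL ℝ w).hasFDerivAt.comp z (hgradDiff i z).hasFDerivAt
      have hfun : (fun y => (inner ℝ w (gradient (f i) y) : ℝ))
          = fun y => fderiv ℝ (f i) y w := by
        funext y
        rw [real_inner_comm]
        exact InnerProductSpace.toDual_symm_apply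
      rw [hfun] at hA
      have hB : HasFDerivAt (fun y => fderiv ℝ (f i) y w)
          ((ContinuousLinearMap.apply ℝ ℝ w).comp (fderiv ℝ (fderiv ℝ (f i)) z)) z :=
        (ContinuousLinearMap.apply ℝ ℝ w).hasFDerivAt.comp z (hfdDiff i z).hasFDerivAt
      have heq := hA.unique hB
      calc (inner ℝ w (fderiv ℝ (gradient (f i)) z p) : ℝ)
          = ((innerSL ℝ w).comp (fderiv ℝ (gradient (f i)) z)) p := by
            simp
        _ = ((ContinuousLinearMap.apply ℝ ℝ w).comp (fderiv ℝ (fderiv ℝ (f i)) z)) p := by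
            rw [heq]
        _ = fderiv ℝ (fderiv ℝ (f i)) z p w := by simp
    rw [hrep u v, hrep v u, hsecond v u]
  -- operator norm bound of the Hessian
  have hHbound : ∀ (i : Fin N) (z w : EuclideanSpace ℝ (Fin M)),
      ‖fderiv ℝ (gradient (f i)) z w‖ ≤ L * ‖w‖ := by
    intro i z w
    refine sym_op_bound _ hL0.le (hsym i z) (fun v => ?_) (fun v => (hHess i z v).2) w
    have := (hHess i z v).1
    nlinarith [sq_nonneg ‖v‖]
  -- one-step Lipschitz estimate for the gradient map
  have hstep : ∀ (i : Fin N) (α : ℝ), 0 ≤ α → ∀ p q : EuclideanSpace ℝ (Fin M),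
      ‖(p - α • gradient (f i) p) - (q - α • gradient (f i) q)‖ ≤
        (if α * L ^ 2 ≤ 2 * μ then 1 else 1 + α * L) * ‖p - q‖ := by
    intro i α hα p q
    have hκ0 : (0:ℝ) ≤ (if α * L ^ 2 ≤ 2 * μ then 1 else 1 + α * L) := by
      split <;> nlinarith
    have hFd : ∀ z : EuclideanSpace ℝ (Fin M),
        HasFDerivAt (fun w => w - α • gradient (f i) w)
          (ContinuousLinearMap.id ℝ (EuclideanSpace ℝ (Fin M))
            - α • fderiv ℝ (gradient (f i)) z) z := by
      intro z
      exact (hasFDerivAt_id z).sub (((hgradDiff i z).hasFDerivAt).const_smul α)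
    have hbound : ∀ z : EuclideanSpace ℝ (Fin M),
        ‖fderiv ℝ (fun w => w - α • gradient (f i) w) z‖ ≤
          (if α * L ^ 2 ≤ 2 * μ then 1 else 1 + α * L) := by
      intro z
      rw [(hFd z).fderiv]
      refine ContinuousLinearMap.opNorm_le_bound _ hκ0 (fun w => ?_)
      have happ : (ContinuousLinearMap.id ℝ (EuclideanSpace ℝ (Fin M))
          - α • fderiv ℝ (gradient (f i)) z) w
          = w - α • (fderiv ℝ (gradient (f i)) z w) := by
        simp
      rw [happ]
      set H := fderiv ℝ (gradient (f i)) z with hH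
      by_cases hcase : α * L ^ 2 ≤ 2 * μ
      · rw [if_pos hcase]
        have hsq : ‖w - α • H w‖ ^ 2 ≤ ‖w‖ ^ 2 := by
          rw [norm_sub_sq_real]
          have h1 : (inner ℝ w (α • H w) : ℝ) = α * (inner ℝ w (H w) : ℝ) :=
            real_inner_smul_right _ _ _
          have h2 : ‖α • H w‖ ^ 2 = α ^ 2 * ‖H w‖ ^ 2 := by
            rw [norm_smul, Real.norm_eq_abs, mul_pow, sq_abs]
          have h3 := (hHess i z w).1
          have h4 := hHbound i z w
          have h5 : ‖H w‖ ^ 2 ≤ L ^ 2 * ‖w‖ ^ 2 := by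
            nlinarith [norm_nonneg (H w), norm_nonneg w]
          rw [h1, h2]
          nlinarith [mul_le_mul_of_nonneg_left hcase hα,
            mul_le_mul_of_nonneg_left h3 hα, sq_nonneg α, norm_nonneg w]
        calc ‖w - α • H w‖ = Real.sqrt (‖w - α • H w‖ ^ 2) :=
              (Real.sqrt_sq (norm_nonneg _)).symm
          _ ≤ Real.sqrt (‖w‖ ^ 2) := Real.sqrt_le_sqrt hsq
          _ = ‖w‖ := Real.sqrt_sq (norm_nonneg _)
          _ = 1 * ‖w‖ := (one_mul _).symm
      · rw [if_neg hcase]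
        have h4 := hHbound i z w
        calc ‖w - α • H w‖ ≤ ‖w‖ + ‖α • H w‖ := norm_sub_le _ _
          _ = ‖w‖ + α * ‖H w‖ := by
              rw [norm_smul, Real.norm_eq_abs, abs_of_nonneg hα]
          _ ≤ ‖w‖ + α * (L * ‖w‖) := by
              have := mul_le_mul_of_nonneg_left h4 hα
              linarith
          _ = (1 + α * L) * ‖w‖ := by ring
    have := Convex.norm_image_sub_le_of_norm_fderiv_le
      (fun z _ => (hFd z).differentiableAt) (fun z _ => hbound z)
      convex_univ (Set.mem_univ q) (Set.mem_univ p)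
    simpa using this
  -- constants
  set K : ℝ := (N : ℝ) * (Real.sqrt M * c₁) with hK
  have hK0 : 0 ≤ K := by positivity
  set Gc : Fin N → ℝ := fun i => ‖gradient (f i) xstar‖ with hGc
  have hGc0 : ∀ i, 0 ≤ Gc i := fun i => norm_nonneg _
  set t0 : ℕ := ⌈a * L ^ 2 / (2 * μ)⌉₊ with ht0def
  have ht0prop : ∀ t : ℕ, t0 ≤ t → a / ((t : ℝ) + 1) * L ^ 2 ≤ 2 * μ := by
    intro t ht
    have h1 : a * L ^ 2 / (2 * μ) ≤ (t0 : ℝ) := Nat.le_ceil _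
    have h2 : (t0 : ℝ) ≤ (t : ℝ) := Nat.cast_le.mpr ht
    have h3 : a * L ^ 2 ≤ 2 * μ * ((t : ℝ) + 1) := by
      rw [div_le_iff₀ (by positivity)] at h1
      nlinarith
    rw [div_mul_eq_mul_div, div_le_iff₀ (by positivity : (0:ℝ) < (t : ℝ) + 1)]
    nlinarith
  set κ : ℕ → ℝ := fun t => if t0 ≤ t then 1 else 1 + a * L with hκdef
  have hκ1 : ∀ t, 1 ≤ κ t := by
    intro t
    simp only [hκdef]
    split <;> nlinarith
  set P : ℝ := (1 + a * L) ^ t0 with hPdef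
  have hP1 : 1 ≤ P := one_le_pow₀ (by nlinarith : (1:ℝ) ≤ 1 + a * L)
  have hP0 : 0 ≤ P := le_trans zero_le_one hP1
  have hProdP : ∀ t, (∏ s ∈ Finset.range t, κ s) ≤ P := by
    intro t
    have haux : ∀ t, (∏ s ∈ Finset.range t, κ s) ≤ (1 + a * L) ^ min t t0 := by
      intro t
      induction t with
      | zero => simp
      | succ t ih =>
        rw [Finset.prod_range_succ]
        by_cases hc : t0 ≤ t
        · have hκt : κ t = 1 := by simp [hκdef, hc]
          rw [hκt, mul_one]
          have : min (t + 1) t0 = min t t0 := by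
            rw [min_eq_right hc, min_eq_right (le_trans hc (Nat.le_succ t))]
          rw [this]
          exact ih
        · have hκt : κ t = 1 + a * L := by simp [hκdef, hc]
          push_neg at hc
          have hm1 : min t t0 = t := min_eq_left (le_of_lt hc)
          have hm2 : min (t + 1) t0 = t + 1 := min_eq_left (Nat.succ_le_of_lt hc)
          rw [hm1] at ih
          rw [hκt, hm2, pow_succ]
          exact mul_le_mul_of_nonneg_right ih (by nlinarith)
    calc (∏ s ∈ Finset.range t, κ s) ≤ (1 + a * L) ^ min t t0 := haux t
      _ ≤ (1 + a * L) ^ t0 := pow_le_pow_right₀ (by nlinarith) (min_le_right _ _)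
  -- bound on the consensus term
  have hSbound : ∀ (t : ℕ) (i : Fin N),
      ‖∑ j ∈ G.neighborFinset i, compPsi M Ψ (x t i - x t j + ξ t i j)‖ ≤ K := by
    intro t i
    calc ‖∑ j ∈ G.neighborFinset i, compPsi M Ψ (x t i - x t j + ξ t i j)‖
        ≤ ∑ j ∈ G.neighborFinset i, ‖compPsi M Ψ (x t i - x t j + ξ t i j)‖ :=
          norm_sum_le _ _
      _ ≤ ∑ _j ∈ G.neighborFinset i, (Real.sqrt M * c₁) :=
          Finset.sum_le_sum (fun j _ => compPsi_norm hc₁.le hΨ_bdd _)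
      _ = ((G.neighborFinset i).card : ℝ) * (Real.sqrt M * c₁) := by
          rw [Finset.sum_const, nsmul_eq_mul]
      _ ≤ (N : ℝ) * (Real.sqrt M * c₁) := by
          apply mul_le_mul_of_nonneg_right _ (by positivity)
          have : (G.neighborFinset i).card ≤ N := by
            calc (G.neighborFinset i).card ≤ Fintype.card (Fin N) :=
              Finset.card_le_univ _
            _ = N := Fintype.card_fin N
          exact_mod_cast this
      _ = K := hK.symm
  -- per-agent recursion
  set r : Fin N → ℕ → ℝ := fun i t => ‖x t i - xstar‖ with hrdef
  set u : Fin N → ℕ → ℝ := fun i t =>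
    a / ((t : ℝ) + 1) * Gc i + b / ((t : ℝ) + 1) ^ δ * K with hudef
  have hu0 : ∀ i t, 0 ≤ u i t := by
    intro i t
    have h1 : (0:ℝ) < ((t : ℝ) + 1) ^ δ := Real.rpow_pos_of_pos (by positivity) δ
    have := hGc0 i
    have h2 : 0 ≤ a / ((t : ℝ) + 1) * Gc i := by positivity
    have h3 : 0 ≤ b / ((t : ℝ) + 1) ^ δ * K := by positivity
    simp only [hudef]; linarith
  have hrec : ∀ (i : Fin N) (t : ℕ), r i (t + 1) ≤ κ t * r i t + u i t := by
    intro i t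
    set α : ℝ := a / ((t : ℝ) + 1) with hαdef
    set β : ℝ := b / ((t : ℝ) + 1) ^ δ with hβdef
    have hα0 : 0 ≤ α := by positivity
    have hβ0 : 0 ≤ β := by
      have : (0:ℝ) < ((t : ℝ) + 1) ^ δ := Real.rpow_pos_of_pos (by positivity) δ
      positivity
    set S := ∑ j ∈ G.neighborFinset i, compPsi M Ψ (x t i - x t j + ξ t i j) with hSdef
    have hxe : x (t + 1) i - xstar =
        ((x t i - α • gradient (f i) (x t i)) - (xstar - α • gradient (f i) xstar))
          - (α • gradient (f i) xstar) - (β • S) := by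
      rw [hx t i]
      abel
    have hlip : ‖(x t i - α • gradient (f i) (x t i))
        - (xstar - α • gradient (f i) xstar)‖ ≤ κ t * r i t := by
      have h1 := hstep i α hα0 (x t i) xstar
      have h2 : (if α * L ^ 2 ≤ 2 * μ then (1:ℝ) else 1 + α * L) ≤ κ t := by
        by_cases hc : t0 ≤ t
        · have := ht0prop t hc
          rw [if_pos this]
          simp only [hκdef]
          rw [if_pos hc]
        · have hκt : κ t = 1 + a * L := by simp [hκdef, hc]
          rw [hκt]
          have hαa : α ≤ a := by
            rw [hαdef]
            exact div_le_self ha.le (by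
              have : (0:ℝ) ≤ (t : ℝ) := Nat.cast_nonneg t
              linarith)
          split
          · nlinarith
          · nlinarith
      calc ‖(x t i - α • gradient (f i) (x t i)) - (xstar - α • gradient (f i) xstar)‖
          ≤ (if α * L ^ 2 ≤ 2 * μ then (1:ℝ) else 1 + α * L) * ‖x t i - xstar‖ := h1
        _ ≤ κ t * r i t := by
            exact mul_le_mul_of_nonneg_right h2 (norm_nonneg _)
    calc r i (t + 1) = ‖x (t + 1) i - xstar‖ := rfl
      _ = ‖((x t i - α • gradient (f i) (x t i)) - (xstar - α • gradient (f i) xstar))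
            - (α • gradient (f i) xstar) - (β • S)‖ := by rw [hxe]
      _ ≤ ‖((x t i - α • gradient (f i) (x t i)) - (xstar - α • gradient (f i) xstar))
            - (α • gradient (f i) xstar)‖ + ‖β • S‖ := norm_sub_le _ _
      _ ≤ ‖(x t i - α • gradient (f i) (x t i)) - (xstar - α • gradient (f i) xstar)‖
            + ‖α • gradient (f i) xstar‖ + ‖β • S‖ := by
          have := norm_sub_le ((x t i - α • gradient (f i) (x t i))
            - (xstar - α • gradient (f i) xstar)) (α • gradient (f i) xstar)
          linarith
      _ ≤ κ t * r i t + α * Gc i + β * K := by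
          have h1 : ‖α • gradient (f i) xstar‖ = α * Gc i := by
            rw [norm_smul, Real.norm_eq_abs, abs_of_nonneg hα0]
          have h2 : ‖β • S‖ ≤ β * K := by
            rw [norm_smul, Real.norm_eq_abs, abs_of_nonneg hβ0]
            exact mul_le_mul_of_nonneg_left (hSbound t i) hβ0
          linarith [hlip]
      _ = κ t * r i t + u i t := by simp only [hudef]; ring
  -- apply the recursion bound and the sum estimate
  have hmain : ∀ (i : Fin N) (t : ℕ),
      r i t ≤ P * r i 0 + (P * (a * Gc i + b * K) / (1 - δ)) * (t : ℝ) ^ (1 - δ) := by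
    intro i t
    have h1 := recursion_bound (r i) (u i) κ hκ1 (hu0 i) (hrec i) t
    have hr00 : 0 ≤ r i 0 := norm_nonneg _
    have hsum : ∑ s ∈ Finset.range t, u i s ≤
        (a * Gc i + b * K) * ((t : ℝ) ^ (1 - δ) / (1 - δ)) := by
      have hterm : ∀ s ∈ Finset.range t,
          u i s ≤ (a * Gc i + b * K) * (1 / ((s : ℝ) + 1) ^ δ) := by
        intro s _
        have hb1 : (1:ℝ) ≤ (s : ℝ) + 1 := by
          have : (0:ℝ) ≤ (s : ℝ) := Nat.cast_nonneg s
          linarith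
        have hple : ((s : ℝ) + 1) ^ δ ≤ (s : ℝ) + 1 := by
          have := Real.rpow_le_rpow_of_exponent_le hb1 hδ1.le
          rwa [Real.rpow_one] at this
        have hppos : (0:ℝ) < ((s : ℝ) + 1) ^ δ := Real.rpow_pos_of_pos (by linarith) δ
        have hfrac : a / ((s : ℝ) + 1) ≤ a / ((s : ℝ) + 1) ^ δ :=
          div_le_div_of_nonneg_left ha.le hppos hple
        have h2 : a / ((s : ℝ) + 1) * Gc i ≤ a / ((s : ℝ) + 1) ^ δ * Gc i :=
          mul_le_mul_of_nonneg_right hfrac (hGc0 i)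
        simp only [hudef]
        have : a / ((s : ℝ) + 1) ^ δ * Gc i + b / ((s : ℝ) + 1) ^ δ * K
            = (a * Gc i + b * K) * (1 / ((s : ℝ) + 1) ^ δ) := by ring
        linarith [this.le, this.ge]
      calc ∑ s ∈ Finset.range t, u i s
          ≤ ∑ s ∈ Finset.range t, (a * Gc i + b * K) * (1 / ((s : ℝ) + 1) ^ δ) :=
            Finset.sum_le_sum hterm
        _ = (a * Gc i + b * K) * ∑ s ∈ Finset.range t, 1 / ((s : ℝ) + 1) ^ δ := by
            rw [Finset.mul_sum]
        _ ≤ (a * Gc i + b * K) * ((t : ℝ) ^ (1 - δ) / (1 - δ)) := by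
            apply mul_le_mul_of_nonneg_left (helper_sum_rpow hδ0 hδ1 t)
            have := hGc0 i
            positivity
    have hsum0 : 0 ≤ ∑ s ∈ Finset.range t, u i s :=
      Finset.sum_nonneg (fun s _ => hu0 i s)
    have hProd0 : 0 ≤ ∏ s ∈ Finset.range t, κ s :=
      Finset.prod_nonneg (fun s _ => le_trans zero_le_one (hκ1 s))
    calc r i t ≤ (∏ s ∈ Finset.range t, κ s) * (r i 0 + ∑ s ∈ Finset.range t, u i s) := h1
      _ ≤ P * (r i 0 + ∑ s ∈ Finset.range t, u i s) := by
          apply mul_le_mul_of_nonneg_right (hProdP t)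
          linarith
      _ ≤ P * (r i 0 + (a * Gc i + b * K) * ((t : ℝ) ^ (1 - δ) / (1 - δ))) := by
          apply mul_le_mul_of_nonneg_left _ hP0
          linarith [hsum]
      _ = P * r i 0 + (P * (a * Gc i + b * K) / (1 - δ)) * (t : ℝ) ^ (1 - δ) := by
          ring
  -- assemble the final constants
  refine ⟨(∑ i, P * r i 0) + 1, (∑ i, P * (a * Gc i + b * K) / (1 - δ)) + 1, ?_, ?_, ?_⟩
  · have : 0 ≤ ∑ i, P * r i 0 :=
      Finset.sum_nonneg (fun i _ => mul_nonneg hP0 (norm_nonneg _))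
    linarith
  · have : 0 ≤ ∑ i, P * (a * Gc i + b * K) / (1 - δ) := by
      refine Finset.sum_nonneg (fun i _ => ?_)
      have := hGc0 i
      positivity
    linarith
  · intro t ht
    have hrp0 : (0:ℝ) ≤ (t : ℝ) ^ (1 - δ) := Real.rpow_nonneg (Nat.cast_nonneg t) _
    have hstep1 : Real.sqrt (∑ i, ‖x t i - xstar‖ ^ 2) ≤ ∑ i, r i t := by
      have h1 : ∑ i, ‖x t i - xstar‖ ^ 2 ≤ (∑ i, ‖x t i - xstar‖) ^ 2 :=
        Finset.sum_sq_le_sq_sum_of_nonneg (fun i _ => norm_nonneg _)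
      calc Real.sqrt (∑ i, ‖x t i - xstar‖ ^ 2)
          ≤ Real.sqrt ((∑ i, ‖x t i - xstar‖) ^ 2) := Real.sqrt_le_sqrt h1
        _ = ∑ i, ‖x t i - xstar‖ :=
            Real.sqrt_sq (Finset.sum_nonneg (fun i _ => norm_nonneg _))
        _ = ∑ i, r i t := rfl
    have hstep2 : ∑ i, r i t ≤
        (∑ i, P * r i 0) + (∑ i, P * (a * Gc i + b * K) / (1 - δ)) * (t : ℝ) ^ (1 - δ) := by
      calc ∑ i, r i t
          ≤ ∑ i, (P * r i 0 + (P * (a * Gc i + b * K) / (1 - δ)) * (t : ℝ) ^ (1 - δ)) :=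
            Finset.sum_le_sum (fun i _ => hmain i t)
        _ = (∑ i, P * r i 0)
            + (∑ i, P * (a * Gc i + b * K) / (1 - δ)) * (t : ℝ) ^ (1 - δ) := by
            rw [Finset.sum_add_distrib, Finset.sum_mul]
      
    calc Real.sqrt (∑ i, ‖x t i - xstar‖ ^ 2) ≤ ∑ i, r i t := hstep1
      _ ≤ (∑ i, P * r i 0) + (∑ i, P * (a * Gc i + b * K) / (1 - δ)) * (t : ℝ) ^ (1 - δ) :=
          hstep2
      _ ≤ ((∑ i, P * r i 0) + 1) + ((∑ i, P * (a * Gc i + b * K) / (1 - δ)) + 1)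
            * (t : ℝ) ^ (1 - δ) := by nlinarith
end

section
/- Let (w_t) and (s_t) be real sequences and (p_t) a sequence with p_t ∈ (0, 1] for all t and ∑_{t=0}^∞ p_t = ∞. Suppose w_{t+1} ≤ (1 − p_t) w_t + p_t s_t for all t, and limsup_{t→∞} s_t ≤ ρ for some real ρ. Then limsup_{t→∞} w_t ≤ ρ. -/
open Filter

/-- If `w_{t+1} ≤ (1 − p_t) w_t + p_t s_t` with `p_t ∈ (0,1]`,
`∑ p_t = ∞`, and `limsup s_t ≤ ρ`, then `limsup w_t ≤ ρ`
(limsups taken in the extended reals). -/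
theorem limsup_recursive_bound (w s : ℕ → ℝ) (p : ℕ → ℝ) (ρ : ℝ)
    (hp : ∀ t, 0 < p t ∧ p t ≤ 1)
    (hp_div : Tendsto (fun n => ∑ t ∈ Finset.range n, p t) atTop atTop)
    (hrec : ∀ t, w (t + 1) ≤ (1 - p t) * w t + p t * s t)
    (hs : limsup (fun t => (s t : EReal)) atTop ≤ (ρ : EReal)) :
    limsup (fun t => (w t : EReal)) atTop ≤ (ρ : EReal) := by
  have key : ∀ ε : ℝ, 0 < ε → ∀ᶠ t in atTop, w t ≤ ρ + ε := by
    intro ε hε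
    have hlt : limsup (fun t => (s t : EReal)) atTop < ((ρ + ε / 2 : ℝ) : EReal) := by
      refine lt_of_le_of_lt hs ?_
      exact_mod_cast (by linarith : ρ < ρ + ε / 2)
    have hev : ∀ᶠ t in atTop, (s t : EReal) < ((ρ + ε / 2 : ℝ) : EReal) :=
      eventually_lt_of_limsup_lt hlt
    obtain ⟨N, hN⟩ := eventually_atTop.1 hev
    have hNs : ∀ t, N ≤ t → s t ≤ ρ + ε / 2 := fun t ht =>
      le_of_lt (by exact_mod_cast hN t ht)
    set c := ρ + ε / 2 with hc
    set M := max (w N - c) 0 with hM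
    set P : ℕ → ℝ := fun t => ∏ i ∈ Finset.Ico N t, (1 - p i) with hP
    have hP0 : ∀ t, 0 ≤ P t := fun t =>
      Finset.prod_nonneg fun i _ => by linarith [(hp i).2]
    have hM0 : 0 ≤ M := le_max_right _ _
    -- inductive bound
    have hbound : ∀ t, N ≤ t → w t - c ≤ P t * M := by
      intro t ht
      induction t with
      | zero =>
        have : N = 0 := Nat.le_zero.mp ht
        subst this
        simp [hP, hM]
      | succ t ih =>
        rcases Nat.lt_or_ge N (t + 1) with h | h
        · have ht' : N ≤ t := Nat.lt_succ_iff.mp h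
          have ihb := ih ht'
          have hpt := hp t
          have hst := hNs t ht'
          have h1 : w (t + 1) - c ≤ (1 - p t) * (w t - c) := by
            have := hrec t
            nlinarith [hpt.1, hpt.2]
          have h2 : (1 - p t) * (w t - c) ≤ (1 - p t) * (P t * M) :=
            mul_le_mul_of_nonneg_left ihb (by linarith [hpt.2])
          have h3 : P (t + 1) = P t * (1 - p t) := by
            simp only [hP]
            rw [Finset.prod_Ico_succ_top ht']
          calc w (t + 1) - c ≤ (1 - p t) * (P t * M) := le_trans h1 h2
            _ = P (t + 1) * M := by rw [h3]; ring
        · have : N = t + 1 := le_antisymm ht h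
          subst this
          simp [hP, hM]
    -- P t → 0
    have hPexp : ∀ t, P t ≤ Real.exp (-(∑ i ∈ Finset.Ico N t, p i)) := by
      intro t
      have : P t ≤ ∏ i ∈ Finset.Ico N t, Real.exp (-(p i)) := by
        refine Finset.prod_le_prod (fun i _ => by linarith [(hp i).2]) ?_
        intro i _
        have := Real.add_one_le_exp (-(p i))
        linarith
      rw [← Real.exp_sum, Finset.sum_neg_distrib] at this
      exact this
    have hsum : Tendsto (fun t => ∑ i ∈ Finset.Ico N t, p i) atTop atTop := by
      have heq : ∀ t, N ≤ t → ∑ i ∈ Finset.Ico N t, p i =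
          (∑ i ∈ Finset.range t, p i) - ∑ i ∈ Finset.range N, p i := by
        intro t ht
        rw [Finset.sum_Ico_eq_sub _ ht]
      have : Tendsto (fun t => (∑ i ∈ Finset.range t, p i) - ∑ i ∈ Finset.range N, p i)
          atTop atTop := hp_div.atTop_add tendsto_const_nhds
      refine this.congr' ?_
      filter_upwards [eventually_ge_atTop N] with t ht using (heq t ht).symm
    have hPto : Tendsto P atTop (nhds 0) := by
      have h1 : Tendsto (fun t => Real.exp (-(∑ i ∈ Finset.Ico N t, p i))) atTop (nhds 0) :=
        Real.tendsto_exp_atBot.comp (tendsto_neg_atBot_iff.mpr hsum)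
      exact squeeze_zero hP0 hPexp h1
    have hPM : Tendsto (fun t => P t * M) atTop (nhds 0) := by
      simpa using hPto.mul_const M
    have hevPM : ∀ᶠ t in atTop, P t * M ≤ ε / 2 := by
      have := hPM.eventually (eventually_le_nhds (by linarith : (0:ℝ) < ε / 2))
      exact this
    filter_upwards [hevPM, eventually_ge_atTop N] with t h1 h2
    have := hbound t h2
    simp only [hc] at this ⊢
    linarith
  refine le_of_forall_gt_imp_ge_of_dense ?_
  intro a ha
  induction a with
  | bot => exact absurd ha (not_lt_bot)
  | top => exact le_top
  | coe x =>
    have hx : ρ < x := by exact_mod_cast ha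
    have hev := key (x - ρ) (by linarith)
    refine limsup_le_of_le ?_ ?_
    · isBoundedDefault
    · filter_upwards [hev] with t ht
      have : w t ≤ x := by linarith
      exact_mod_cast this
end
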